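/- arXiv:1711.00571 — 6 statements merged into one kernel-verified Lean document; each statement's English description precedes it below -/
import Mathlib

section
/- Let A, A' be symmetric positive semidefinite matrices with (1+√ε)^{-1} A ⪯ A' ⪯ (1+√ε) A for some ε ≤ 1/16. Let b ∈ Range(A), and suppose A x = b and A' y = b. Then y^T A y ≤ 2 q(x), where q(z) = 2⟨b,z⟩ - z^T A z. -/
open Matrix

/-- Loewner order on real symmetric matrices: domination of quadratic forms. -/
def LoewnerLE {n : ℕ} (M N : Matrix (Fin n) (Fin n) ℝ) : Prop :=
  ∀ z : Fin n → ℝ, z ⬝ᵥ M.mulVec z ≤ z ⬝ᵥ N.mulVec z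

open scoped MatrixOrder in
lemma psd_cauchy_schwarz {n : ℕ} {A : Matrix (Fin n) (Fin n) ℝ} (hA : A.PosSemidef)
    (x y : Fin n → ℝ) :
    (y ⬝ᵥ A.mulVec x)^2 ≤ (x ⬝ᵥ A.mulVec x) * (y ⬝ᵥ A.mulVec y) := by
  obtain ⟨S, hX, -, hSS⟩ :=
    CFC.exists_sqrt_of_isSelfAdjoint_of_quasispectrumRestricts hA.isHermitian
      (QuasispectrumRestricts.nnreal_of_nonneg hA.nonneg)
  have hsym : Sᵀ = S := by
    have := hX.star_eq
    simpa [star_eq_conjTranspose] using this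
  have key : ∀ u v : Fin n → ℝ, u ⬝ᵥ A.mulVec v = (S.mulVec u) ⬝ᵥ (S.mulVec v) := by
    intro u v
    rw [← hSS, ← mulVec_mulVec, dotProduct_mulVec, ← mulVec_transpose, hsym]
  rw [key, key, key]
  have h := Finset.sum_mul_sq_le_sq_mul_sq Finset.univ (S.mulVec y) (S.mulVec x)
  simp only [dotProduct, sq] at h ⊢
  nlinarith [h]

theorem stmt_3 {n : ℕ} (A A' : Matrix (Fin n) (Fin n) ℝ)
    (hA : A.PosSemidef) (hA' : A'.PosSemidef)
    (ε : ℝ) (hε0 : 0 ≤ ε) (hε : ε ≤ 1 / 16)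
    (hlow : LoewnerLE ((1 + Real.sqrt ε)⁻¹ • A) A')
    (hhigh : LoewnerLE A' ((1 + Real.sqrt ε) • A))
    (b x y : Fin n → ℝ) (hb : ∃ w, A.mulVec w = b)
    (hx : A.mulVec x = b) (hy : A'.mulVec y = b)
    (q : (Fin n → ℝ) → ℝ)
    (hq : ∀ z, q z = 2 * (b ⬝ᵥ z) - z ⬝ᵥ A.mulVec z) :
    y ⬝ᵥ A.mulVec y ≤ 2 * q x := by
  set s := Real.sqrt ε with hs
  have hs0 : 0 ≤ s := Real.sqrt_nonneg _
  have hs4 : s ≤ 1/4 := by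
    rw [hs]
    have : Real.sqrt ε ≤ Real.sqrt (1/16) := Real.sqrt_le_sqrt hε
    calc Real.sqrt ε ≤ Real.sqrt (1/16) := this
      _ = 1/4 := by
        rw [show (1:ℝ)/16 = (1/4)^2 by norm_num, Real.sqrt_sq (by norm_num)]
  have h1s : (0:ℝ) < 1 + s := by linarith
  set t := y ⬝ᵥ A.mulVec y with ht
  set c := x ⬝ᵥ A.mulVec x with hc
  have ht0 : 0 ≤ t := by simpa using hA.dotProduct_mulVec_nonneg y
  have hc0 : 0 ≤ c := by simpa using hA.dotProduct_mulVec_nonneg x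
  -- b ⬝ᵥ x = c
  have hbx : b ⬝ᵥ x = c := by
    rw [dotProduct_comm, ← hx]
  have hqx : q x = c := by rw [hq, hbx]; ring
  -- from hlow : t ≤ (1+s) * (y ⬝ᵥ b)
  have hyb : y ⬝ᵥ A'.mulVec y = y ⬝ᵥ b := by rw [hy]
  have hlow' := hlow y
  rw [smul_mulVec, dotProduct_smul, hyb] at hlow'
  have hstep : t ≤ (1 + s) * (y ⬝ᵥ b) := by
    rw [← ht] at hlow'
    have := (inv_mul_le_iff₀ h1s).mp (by simpa [smul_eq_mul] using hlow')
    linarith [this]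
  -- y ⬝ᵥ b = y ⬝ᵥ A x, Cauchy–Schwarz
  have hcs : (y ⬝ᵥ b)^2 ≤ c * t := by
    rw [← hx]
    exact psd_cauchy_schwarz hA x y
  -- conclude t ≤ (1+s)^2 * c ≤ 2 c
  have hts : t ≤ (1 + s)^2 * c := by
    rcases eq_or_lt_of_le ht0 with h | h
    · nlinarith
    · nlinarith [sq_nonneg (y ⬝ᵥ b), hstep, hcs]
  have hsq : (1 + s)^2 ≤ 2 := by nlinarith [mul_le_mul hs4 hs4 hs0 (by norm_num : (0:ℝ) ≤ 1/4)]
  have h2 : (1 + s)^2 * c ≤ 2 * c := mul_le_mul_of_nonneg_right hsq hc0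
  rw [hqx]
  linarith
end

section
/- Let A be a symmetric PSD matrix, b ∈ Range(A), ε ≤ 1/16, and S a symmetric matrix with (1+√ε)^{-1} A⁺ ⪯ S ⪯ (1+√ε) A⁺ and Range(S) = Range(A). Let y = S b, and let f be a real number satisfying (1-ε) y^T A y ≤ f ≤ (1+ε) y^T A y. Then |2 b^T y - f - b^T A⁺ b| ≤ 4ε · b^T A⁺ b. -/
open Matrix

/-- `Ap` is the Moore–Penrose pseudoinverse of `A` (the four Penrose conditions). -/
def IsMoorePenroseInv {n : ℕ} (A Ap : Matrix (Fin n) (Fin n) ℝ) : Prop :=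
  A * Ap * A = A ∧ Ap * A * Ap = Ap ∧ (A * Ap)ᵀ = A * Ap ∧ (Ap * A)ᵀ = Ap * A

namespace Stmt5Aux

variable {n : ℕ}

lemma dot_self_nonneg' (v : Fin n → ℝ) : 0 ≤ v ⬝ᵥ v :=
  Finset.sum_nonneg fun i _ => mul_self_nonneg _

lemma dot_symm (M : Matrix (Fin n) (Fin n) ℝ) (hM : Mᵀ = M) (u v : Fin n → ℝ) :
    u ⬝ᵥ M.mulVec v = M.mulVec u ⬝ᵥ v := by
  rw [Matrix.dotProduct_mulVec, ← Matrix.mulVec_transpose, hM]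

lemma mp_unique (A B C : Matrix (Fin n) (Fin n) ℝ)
    (hB : IsMoorePenroseInv A B) (hC : IsMoorePenroseInv A C) : B = C := by
  obtain ⟨b1, b2, b3, b4⟩ := hB
  obtain ⟨c1, c2, c3, c4⟩ := hC
  have h1 : A * B = A * C := by
    calc A * B = (A * B)ᵀ := b3.symm
      _ = Bᵀ * Aᵀ := by rw [Matrix.transpose_mul]
      _ = Bᵀ * (A * C * A)ᵀ := by rw [c1]
      _ = Bᵀ * (Aᵀ * (A * C)ᵀ) := by rw [Matrix.transpose_mul (A * C) A]
      _ = (Bᵀ * Aᵀ) * (A * C)ᵀ := by simp only [mul_assoc]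
      _ = (A * B)ᵀ * (A * C)ᵀ := by rw [← Matrix.transpose_mul A B]
      _ = (A * B) * (A * C) := by rw [b3, c3]
      _ = (A * B * A) * C := by simp only [mul_assoc]
      _ = A * C := by rw [b1]
  have h2 : B * A = C * A := by
    calc B * A = (B * A)ᵀ := b4.symm
      _ = Aᵀ * Bᵀ := by rw [Matrix.transpose_mul]
      _ = (A * C * A)ᵀ * Bᵀ := by rw [c1]
      _ = (Aᵀ * (Cᵀ * Aᵀ)) * Bᵀ := by
            rw [Matrix.transpose_mul (A * C) A, Matrix.transpose_mul A C]
      _ = (Aᵀ * Cᵀ) * (Aᵀ * Bᵀ) := by simp only [mul_assoc]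
      _ = (C * A)ᵀ * (B * A)ᵀ := by rw [Matrix.transpose_mul C A, Matrix.transpose_mul B A]
      _ = (C * A) * (B * A) := by rw [c4, b4]
      _ = C * (A * B * A) := by simp only [mul_assoc]
      _ = C * A := by rw [b1]
  calc B = B * A * B := b2.symm
    _ = C * A * B := by rw [h2]
    _ = C * (A * B) := by rw [mul_assoc]
    _ = C * (A * C) := by rw [h1]
    _ = C * A * C := by rw [mul_assoc]
    _ = C := c2

lemma proj_nonneg (P : Matrix (Fin n) (Fin n) ℝ) (hP : Pᵀ = P) (hPP : P * P = P)
    (z : Fin n → ℝ) : 0 ≤ z ⬝ᵥ P.mulVec z := by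
  have h : z ⬝ᵥ P.mulVec z = P.mulVec z ⬝ᵥ P.mulVec z := by
    conv_lhs => rw [← hPP, ← Matrix.mulVec_mulVec, dot_symm P hP]
  rw [h]
  exact dot_self_nonneg' _

lemma proj_le (P : Matrix (Fin n) (Fin n) ℝ) (hP : Pᵀ = P) (hPP : P * P = P)
    (z : Fin n → ℝ) : z ⬝ᵥ P.mulVec z ≤ z ⬝ᵥ z := by
  have h1 : ((1 : Matrix (Fin n) (Fin n) ℝ) - P)ᵀ = 1 - P := by
    rw [Matrix.transpose_sub, Matrix.transpose_one, hP]
  have h2 : ((1 : Matrix (Fin n) (Fin n) ℝ) - P) * (1 - P) = 1 - P := by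
    have e : ((1 : Matrix (Fin n) (Fin n) ℝ) - P) * (1 - P) = 1 - P - P + P * P := by
      noncomm_ring
    rw [e, hPP]
    noncomm_ring
  have h3 := proj_nonneg _ h1 h2 z
  rw [Matrix.sub_mulVec, Matrix.one_mulVec, dotProduct_sub] at h3
  linarith

lemma op_bound (M : Matrix (Fin n) (Fin n) ℝ) (hM : Mᵀ = M) (s : ℝ) (hs : 0 ≤ s)
    (h : ∀ z, |z ⬝ᵥ M.mulVec z| ≤ s * (z ⬝ᵥ z)) (w : Fin n → ℝ) :
    M.mulVec w ⬝ᵥ M.mulVec w ≤ s ^ 2 * (w ⬝ᵥ w) := by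
  have key : ∀ x z : Fin n → ℝ,
      4 * (x ⬝ᵥ M.mulVec z) ≤ 2 * s * ((x ⬝ᵥ x) + (z ⬝ᵥ z)) := by
    intro x z
    have hsym : z ⬝ᵥ M.mulVec x = x ⬝ᵥ M.mulVec z := by
      rw [dot_symm M hM z x, dotProduct_comm]
    have h1 := (abs_le.mp (h (x + z))).2
    have h2 := (abs_le.mp (h (x - z))).1
    have e1 : (x + z) ⬝ᵥ M.mulVec (x + z)
        = x ⬝ᵥ M.mulVec x + 2 * (x ⬝ᵥ M.mulVec z) + z ⬝ᵥ M.mulVec z := by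
      simp only [Matrix.mulVec_add, dotProduct_add, add_dotProduct, hsym]
      ring
    have e2 : (x - z) ⬝ᵥ M.mulVec (x - z)
        = x ⬝ᵥ M.mulVec x - 2 * (x ⬝ᵥ M.mulVec z) + z ⬝ᵥ M.mulVec z := by
      simp only [Matrix.mulVec_sub, dotProduct_sub, sub_dotProduct, hsym]
      ring
    have n1 : (x + z) ⬝ᵥ (x + z) = x ⬝ᵥ x + 2 * (x ⬝ᵥ z) + z ⬝ᵥ z := by
      simp only [dotProduct_add, add_dotProduct, dotProduct_comm z x]
      ring
    have n2 : (x - z) ⬝ᵥ (x - z) = x ⬝ᵥ x - 2 * (x ⬝ᵥ z) + z ⬝ᵥ z := by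
      simp only [dotProduct_sub, sub_dotProduct, dotProduct_comm z x]
      ring
    rw [e1, n1] at h1
    rw [e2, n2] at h2
    nlinarith [h1, h2]
  set u := M.mulVec w with hu
  have hq0 : 0 ≤ u ⬝ᵥ u := dot_self_nonneg' u
  have hp0 : 0 ≤ w ⬝ᵥ w := dot_self_nonneg' w
  have key2 : ∀ a : ℝ, a ≠ 0 →
      4 * (u ⬝ᵥ u) ≤ 2 * s * (a ^ 2 * (u ⬝ᵥ u) + (a⁻¹) ^ 2 * (w ⬝ᵥ w)) := by
    intro a ha
    have hMa : M.mulVec (a⁻¹ • w) = a⁻¹ • u := by rw [Matrix.mulVec_smul]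
    have hk := key (a • u) (a⁻¹ • w)
    rw [hMa] at hk
    rw [smul_dotProduct, dotProduct_smul, smul_dotProduct, dotProduct_smul,
      smul_dotProduct, dotProduct_smul, smul_eq_mul, smul_eq_mul, smul_eq_mul,
      smul_eq_mul, smul_eq_mul, smul_eq_mul] at hk
    have haa : a * a⁻¹ = 1 := mul_inv_cancel₀ ha
    calc 4 * (u ⬝ᵥ u) = 4 * (a * (a⁻¹ * (u ⬝ᵥ u))) := by
          field_simp
      _ ≤ 2 * s * (a * (a * (u ⬝ᵥ u)) + a⁻¹ * (a⁻¹ * (w ⬝ᵥ w))) := hk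
      _ = 2 * s * (a ^ 2 * (u ⬝ᵥ u) + (a⁻¹) ^ 2 * (w ⬝ᵥ w)) := by ring
  rcases le_or_gt (u ⬝ᵥ u) 0 with hq | hq
  · nlinarith [mul_nonneg (sq_nonneg s) hp0]
  rcases eq_or_lt_of_le hp0 with hp | hp
  · -- w ⬝ᵥ w = 0 : take a small
    have h1s : (0 : ℝ) < 1 + s := by linarith
    have hsqn : Real.sqrt (1 + s) ≠ 0 := by positivity
    have hk := key2 (Real.sqrt (1 + s))⁻¹ (inv_ne_zero hsqn)
    have e1 : ((Real.sqrt (1 + s))⁻¹) ^ 2 = (1 + s)⁻¹ := by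
      rw [inv_pow, Real.sq_sqrt h1s.le]
    have e2 : (((Real.sqrt (1 + s))⁻¹)⁻¹) ^ 2 = 1 + s := by
      rw [inv_inv, Real.sq_sqrt h1s.le]
    rw [e1, e2, ← hp] at hk
    have h5 : s * (1 + s)⁻¹ ≤ 1 := by
      rw [← div_eq_mul_inv, div_le_one h1s]; linarith
    have h6 := mul_le_mul_of_nonneg_right h5 hq0
    rw [← hp, mul_zero]
    linarith [hk, h6]
  · -- both positive
    have hsp := Real.sqrt_pos.mpr hp
    have hsq := Real.sqrt_pos.mpr hq
    set sp := Real.sqrt (w ⬝ᵥ w) with hspdef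
    set sq := Real.sqrt (u ⬝ᵥ u) with hsqdef
    have hsp2 : sp ^ 2 = w ⬝ᵥ w := Real.sq_sqrt hp0
    have hsq2 : sq ^ 2 = u ⬝ᵥ u := Real.sq_sqrt hq0
    have harg : 0 < sp / sq := div_pos hsp hsq
    have ha : Real.sqrt (sp / sq) ≠ 0 := by positivity
    have hk := key2 (Real.sqrt (sp / sq)) ha
    have e1 : (Real.sqrt (sp / sq)) ^ 2 = sp / sq := Real.sq_sqrt harg.le
    have e2 : ((Real.sqrt (sp / sq))⁻¹) ^ 2 = sq / sp := by
      rw [inv_pow, e1, inv_div]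
    rw [e1, e2] at hk
    have hbal : sp / sq * (u ⬝ᵥ u) + sq / sp * (w ⬝ᵥ w) = 2 * (sp * sq) := by
      field_simp
      nlinarith [hsp2, hsq2]
    rw [hbal] at hk
    -- hk : 4 * (u ⬝ᵥ u) ≤ 2 * s * (2 * (sp * sq))
    nlinarith [sq_nonneg (s * sp - sq), hsq2, hsp2, mul_pos hsp hsq, hs]

end Stmt5Aux

open Stmt5Aux

theorem stmt_5 {n : ℕ} (A Ap S : Matrix (Fin n) (Fin n) ℝ)
    (hA : A.PosSemidef) (hAp : IsMoorePenroseInv A Ap)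
    (hS : S.PosSemidef)
    (ε : ℝ) (hε0 : 0 < ε) (hε : ε ≤ 1 / 16)
    (hlow : LoewnerLE ((1 + Real.sqrt ε)⁻¹ • Ap) S)
    (hhigh : LoewnerLE S ((1 + Real.sqrt ε) • Ap))
    (hrange : Set.range S.mulVec = Set.range A.mulVec)
    (b : Fin n → ℝ) (hb : ∃ w, A.mulVec w = b)
    (y : Fin n → ℝ) (hy : y = S.mulVec b)
    (f : ℝ)
    (hf1 : (1 - ε) * (y ⬝ᵥ A.mulVec y) ≤ f)
    (hf2 : f ≤ (1 + ε) * (y ⬝ᵥ A.mulVec y)) :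
    |2 * (b ⬝ᵥ y) - f - b ⬝ᵥ Ap.mulVec b| ≤ 4 * ε * (b ⬝ᵥ Ap.mulVec b) := by
  obtain ⟨p1, p2, p3, p4⟩ := hAp
  obtain ⟨w0, hw0⟩ := hb
  set s := Real.sqrt ε with hsdef
  have hs0 : 0 ≤ s := Real.sqrt_nonneg ε
  have hs2 : s ^ 2 = ε := Real.sq_sqrt hε0.le
  have hs4 : s ≤ 1 / 4 := by
    have h1 : s ≤ Real.sqrt (1 / 16) := Real.sqrt_le_sqrt hε
    have h2 : Real.sqrt (1 / 16 : ℝ) = 1 / 4 := by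
      rw [show (1 / 16 : ℝ) = (1 / 4) ^ 2 by norm_num, Real.sqrt_sq (by norm_num)]
    linarith [h1, h2.le]
  have hAsym : Aᵀ = A := by
    have := hA.1
    rwa [Matrix.IsHermitian, conjTranspose_eq_transpose_of_trivial] at this
  have hSsym : Sᵀ = S := by
    have := hS.1
    rwa [Matrix.IsHermitian, conjTranspose_eq_transpose_of_trivial] at this
  -- Ap is symmetric
  have hApT : IsMoorePenroseInv A Apᵀ := by
    refine ⟨?_, ?_, ?_, ?_⟩
    · have e : (A * Ap * A)ᵀ = A * Apᵀ * A := by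
        rw [Matrix.transpose_mul, Matrix.transpose_mul, hAsym, ← mul_assoc]
      rw [← e, p1, hAsym]
    · have e : (Ap * A * Ap)ᵀ = Apᵀ * A * Apᵀ := by
        rw [Matrix.transpose_mul, Matrix.transpose_mul, hAsym, ← mul_assoc]
      rw [← e, p2]
    · have e : A * Apᵀ = Ap * A := by
        calc A * Apᵀ = (Ap * Aᵀ)ᵀ := by
              rw [Matrix.transpose_mul, Matrix.transpose_transpose]
          _ = (Ap * A)ᵀ := by rw [hAsym]
          _ = Ap * A := p4
      rw [e, p4]
    · have e : Apᵀ * A = A * Ap := by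
        calc Apᵀ * A = (Aᵀ * Ap)ᵀ := by
              rw [Matrix.transpose_mul, Matrix.transpose_transpose]
          _ = (A * Ap)ᵀ := by rw [hAsym]
          _ = A * Ap := p3
      rw [e, p3]
  have hApsym : Apᵀ = Ap := mp_unique A Apᵀ Ap hApT ⟨p1, p2, p3, p4⟩
  -- square root of A
  obtain ⟨R, hRR', hRpsd⟩ : ∃ R : Matrix (Fin n) (Fin n) ℝ, R * R = A ∧ R.PosSemidef := by
    open scoped MatrixOrder in
    exact ⟨CFC.sqrt A, CFC.sqrt_mul_sqrt_self A hA.nonneg,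
      Matrix.nonneg_iff_posSemidef.mp (CFC.sqrt_nonneg A)⟩
  have hRR : R * R = A := hRR'
  have hRsym : Rᵀ = R := by
    have := hRpsd.1
    rwa [Matrix.IsHermitian, conjTranspose_eq_transpose_of_trivial] at this
  set xs := Ap.mulVec b with hxs
  set g := R.mulVec xs with hg
  have hAxs : A.mulVec xs = b := by
    rw [hxs, Matrix.mulVec_mulVec, ← hw0, Matrix.mulVec_mulVec, p1]
  have hRg : R.mulVec g = b := by
    rw [hg, Matrix.mulVec_mulVec, hRR, hAxs]
  -- the projector Q = R * Ap * R
  have hQsym : (R * Ap * R)ᵀ = R * Ap * R := by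
    rw [Matrix.transpose_mul, Matrix.transpose_mul, hRsym, hApsym, ← mul_assoc]
  have hQQ : (R * Ap * R) * (R * Ap * R) = R * Ap * R := by
    calc (R * Ap * R) * (R * Ap * R) = R * (Ap * ((R * R) * (Ap * R))) := by
          simp only [mul_assoc]
      _ = R * (Ap * (A * (Ap * R))) := by rw [hRR]
      _ = R * ((Ap * A * Ap) * R) := by simp only [mul_assoc]
      _ = R * (Ap * R) := by rw [p2]
      _ = R * Ap * R := by rw [mul_assoc]
  -- quadratic form identities
  have hformS : ∀ z : Fin n → ℝ, z ⬝ᵥ (R * S * R).mulVec z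
      = R.mulVec z ⬝ᵥ S.mulVec (R.mulVec z) := by
    intro z
    rw [← Matrix.mulVec_mulVec, ← Matrix.mulVec_mulVec, dot_symm R hRsym]
  have hformQ : ∀ z : Fin n → ℝ, z ⬝ᵥ (R * Ap * R).mulVec z
      = R.mulVec z ⬝ᵥ Ap.mulVec (R.mulVec z) := by
    intro z
    rw [← Matrix.mulVec_mulVec, ← Matrix.mulVec_mulVec, dot_symm R hRsym]
  -- M = R*S*R - R*Ap*R has small quadratic form
  have hMsym : (R * S * R - R * Ap * R)ᵀ = R * S * R - R * Ap * R := by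
    rw [Matrix.transpose_sub, hQsym, Matrix.transpose_mul, Matrix.transpose_mul,
      hRsym, hSsym, ← mul_assoc]
  have hinv : 1 - s ≤ (1 + s)⁻¹ := by
    have h1s : (0 : ℝ) < 1 + s := by linarith
    rw [inv_eq_one_div, le_div_iff₀ h1s]
    nlinarith [sq_nonneg s]
  have hMbound : ∀ z : Fin n → ℝ,
      |z ⬝ᵥ (R * S * R - R * Ap * R).mulVec z| ≤ s * (z ⬝ᵥ z) := by
    intro z
    have hhz := hhigh (R.mulVec z)
    have hlz := hlow (R.mulVec z)
    rw [Matrix.smul_mulVec, dotProduct_smul, smul_eq_mul] at hhz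
    rw [Matrix.smul_mulVec, dotProduct_smul, smul_eq_mul] at hlz
    have hQz1 : 0 ≤ z ⬝ᵥ (R * Ap * R).mulVec z := proj_nonneg _ hQsym hQQ z
    have hQz2 : z ⬝ᵥ (R * Ap * R).mulVec z ≤ z ⬝ᵥ z := proj_le _ hQsym hQQ z
    rw [hformQ z] at hQz1 hQz2
    have hMz : z ⬝ᵥ (R * S * R - R * Ap * R).mulVec z
        = R.mulVec z ⬝ᵥ S.mulVec (R.mulVec z) - R.mulVec z ⬝ᵥ Ap.mulVec (R.mulVec z) := by
      rw [Matrix.sub_mulVec, dotProduct_sub, hformS, hformQ]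
    rw [hMz, abs_le]
    constructor
    · nlinarith [hlz, hQz1, hQz2, hs0, hinv,
        mul_le_mul_of_nonneg_left hQz2 hs0,
        mul_le_mul_of_nonneg_right hinv hQz1]
    · nlinarith [hhz, hQz1, hQz2, hs0, mul_le_mul_of_nonneg_left hQz2 hs0]
  have hMM := op_bound (R * S * R - R * Ap * R) hMsym s hs0 hMbound g
  -- compute M g
  have hMg1 : (R * S * R).mulVec g = R.mulVec y := by
    rw [← Matrix.mulVec_mulVec, ← Matrix.mulVec_mulVec, hRg, ← hy]
  have hMg2 : (R * Ap * R).mulVec g = g := by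
    rw [← Matrix.mulVec_mulVec, ← Matrix.mulVec_mulVec, hRg, ← hxs, ← hg]
  have hMg : (R * S * R - R * Ap * R).mulVec g = R.mulVec y - g := by
    rw [Matrix.sub_mulVec, hMg1, hMg2]
  rw [hMg] at hMM
  -- dot product expansions
  have hRyRy : R.mulVec y ⬝ᵥ R.mulVec y = y ⬝ᵥ A.mulVec y := by
    have e := dot_symm R hRsym y (R.mulVec y)
    rw [← e, Matrix.mulVec_mulVec, hRR]
  have hRyg : R.mulVec y ⬝ᵥ g = b ⬝ᵥ y := by
    have e := dot_symm R hRsym y g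
    rw [← e, hRg, dotProduct_comm]
  have hgg : g ⬝ᵥ g = b ⬝ᵥ Ap.mulVec b := by
    have e := dot_symm R hRsym xs g
    rw [hg, ← e, hRg, hxs, dotProduct_comm]
  set α := b ⬝ᵥ Ap.mulVec b with hα
  set β := b ⬝ᵥ y with hβ
  set γ := y ⬝ᵥ A.mulVec y with hγ
  clear_value α β γ
  have hexp : (R.mulVec y - g) ⬝ᵥ (R.mulVec y - g) = γ - 2 * β + α := by
    rw [dotProduct_sub, sub_dotProduct, sub_dotProduct, hRyRy, hRyg, hgg,
      dotProduct_comm g (R.mulVec y), hRyg]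
    ring
  rw [hexp, hgg] at hMM
  have E0 : 0 ≤ γ - 2 * β + α := by
    rw [← hexp]; exact dot_self_nonneg' _
  have hβle : β ≤ (1 + s) * α := by
    have hhb := hhigh b
    rw [Matrix.smul_mulVec, dotProduct_smul, smul_eq_mul] at hhb
    rw [hβ, hy, hα]
    exact hhb
  have hγ0 : 0 ≤ γ := by rw [hγ]; simpa using hA.dotProduct_mulVec_nonneg y
  have hα0 : 0 ≤ α := hgg ▸ dot_self_nonneg' g
  have hs2a : s ^ 2 * α = ε * α := by rw [hs2]
  have hMMe : γ - 2 * β + α ≤ ε * α := by linarith [hMM, hs2a]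
  have hγle : γ ≤ ε * α + (1 + 2 * s) * α := by linarith [hMMe, hβle]
  have hεγ : ε * γ ≤ ε * (ε * α + (1 + 2 * s) * α) := mul_le_mul_of_nonneg_left hγle hε0.le
  have hup : 2 * β - f - α ≤ ε * γ := by linarith [hf1, E0]
  have hdn : -(ε * α) - ε * γ ≤ 2 * β - f - α := by linarith [hf2, hMMe]
  have hkey : 0 ≤ ε * α * (3 - ε - 2 * s) :=
    mul_nonneg (mul_nonneg hε0.le hα0) (by linarith : (0:ℝ) ≤ 3 - ε - 2 * s)
  have hkey2 : 0 ≤ ε * α * (2 - ε - 2 * s) :=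
    mul_nonneg (mul_nonneg hε0.le hα0) (by linarith : (0:ℝ) ≤ 2 - ε - 2 * s)
  rw [abs_le]
  constructor
  · linarith [hdn, hεγ, hkey2]
  · linarith [hup, hεγ, hkey]
end

section
/- Let A, A' be symmetric PSD matrices with (1+√ε)^{-1} A ⪯ A' ⪯ (1+√ε) A, where 0 ≤ ε. Then the spectral norm of A^{-1/2}(A - A')A^{-1/2} is at most √ε, where A^{-1/2} denotes the pseudoinverse of the PSD square root of A (assuming Range(A') ⊆ Range(A)). -/
open Matrix

/-- Uniqueness of the Moore–Penrose pseudoinverse. -/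
lemma mp_unique {n : ℕ} {A B C : Matrix (Fin n) (Fin n) ℝ}
    (hB : IsMoorePenroseInv A B) (hC : IsMoorePenroseInv A C) : B = C := by
  obtain ⟨hB1, hB2, hB3, hB4⟩ := hB
  obtain ⟨hC1, hC2, hC3, hC4⟩ := hC
  have hAB : A * B = A * C := by
    have h1 : A * B = (A * B) * (A * C) := by
      calc A * B = (A * B)ᵀ := hB3.symm
        _ = ((A * C * A) * B)ᵀ := by rw [hC1]
        _ = ((A * C) * (A * B))ᵀ := by rw [Matrix.mul_assoc (A * C) A B]
        _ = (A * B)ᵀ * (A * C)ᵀ := transpose_mul _ _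
        _ = (A * B) * (A * C) := by rw [hB3, hC3]
    calc A * B = (A * B) * (A * C) := h1
      _ = ((A * B) * A) * C := by rw [Matrix.mul_assoc (A * B) A C]
      _ = A * C := by rw [hB1]
  have hBA : B * A = C * A := by
    have h1 : B * A = (C * A) * (B * A) := by
      calc B * A = (B * A)ᵀ := hB4.symm
        _ = (B * (A * C * A))ᵀ := by rw [hC1]
        _ = ((B * (A * C)) * A)ᵀ := by rw [Matrix.mul_assoc B (A * C) A]
        _ = ((B * A) * (C * A))ᵀ := by
              rw [← Matrix.mul_assoc B A C, Matrix.mul_assoc (B * A) C A]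
        _ = (C * A)ᵀ * (B * A)ᵀ := transpose_mul _ _
        _ = (C * A) * (B * A) := by rw [hB4, hC4]
    calc B * A = (C * A) * (B * A) := h1
      _ = C * (A * (B * A)) := by rw [Matrix.mul_assoc C A (B * A)]
      _ = C * ((A * B) * A) := by rw [Matrix.mul_assoc A B A]
      _ = C * A := by rw [hB1]
  calc B = B * A * B := hB2.symm
    _ = C * A * B := by rw [hBA]
    _ = C * (A * B) := by rw [Matrix.mul_assoc]
    _ = C * (A * C) := by rw [hAB]
    _ = C * A * C := by rw [Matrix.mul_assoc]
    _ = C := hC2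

/-- The Moore–Penrose pseudoinverse of a symmetric matrix is symmetric. -/
lemma mp_symm {n : ℕ} {A B : Matrix (Fin n) (Fin n) ℝ}
    (hA : Aᵀ = A) (hB : IsMoorePenroseInv A B) : Bᵀ = B := by
  obtain ⟨hB1, hB2, hB3, hB4⟩ := hB
  have hBt : IsMoorePenroseInv A Bᵀ := by
    refine ⟨?_, ?_, ?_, ?_⟩
    · calc A * Bᵀ * A = Aᵀ * Bᵀ * Aᵀ := by rw [hA]
        _ = (A * (B * A))ᵀ := by rw [transpose_mul, transpose_mul, Matrix.mul_assoc]
        _ = (A * B * A)ᵀ := by rw [Matrix.mul_assoc]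
        _ = Aᵀ := by rw [hB1]
        _ = A := hA
    · calc Bᵀ * A * Bᵀ = Bᵀ * Aᵀ * Bᵀ := by rw [hA]
        _ = (B * (A * B))ᵀ := by rw [transpose_mul, transpose_mul, Matrix.mul_assoc]
        _ = (B * A * B)ᵀ := by rw [Matrix.mul_assoc]
        _ = Bᵀ := by rw [hB2]
    · calc (A * Bᵀ)ᵀ = B * Aᵀ := by rw [transpose_mul, transpose_transpose]
        _ = B * A := by rw [hA]
        _ = (B * A)ᵀ := hB4.symm
        _ = Aᵀ * Bᵀ := by rw [transpose_mul]
        _ = A * Bᵀ := by rw [hA]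
    · calc (Bᵀ * A)ᵀ = Aᵀ * B := by rw [transpose_mul, transpose_transpose]
        _ = A * B := by rw [hA]
        _ = (A * B)ᵀ := hB3.symm
        _ = Bᵀ * Aᵀ := by rw [transpose_mul]
        _ = Bᵀ * A := by rw [hA]
  exact (mp_unique ⟨hB1, hB2, hB3, hB4⟩ hBt).symm

open RealInnerProductSpace in
/-- Operator norm bound for a symmetric operator from a bound on its quadratic form. -/
lemma opnorm_le_of_quadform {E : Type*} [NormedAddCommGroup E] [InnerProductSpace ℝ E]
    (T : E →L[ℝ] E) (hsym : ∀ x y : E, ⟪T x, y⟫ = ⟪x, T y⟫) {c : ℝ} (hc : 0 ≤ c)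
    (hq : ∀ x : E, |⟪T x, x⟫| ≤ c * ‖x‖ ^ 2) : ‖T‖ ≤ c := by
  have key : ∀ u v : E, ⟪T u, v⟫ ≤ c / 2 * (‖u‖ ^ 2 + ‖v‖ ^ 2) := by
    intro u v
    have h1 := (abs_le.mp (hq (u + v))).2
    have h2 := (abs_le.mp (hq (u - v))).1
    have e1 : ⟪T (u + v), u + v⟫ = ⟪T u, u⟫ + 2 * ⟪T u, v⟫ + ⟪T v, v⟫ := by
      have hvu : ⟪T v, u⟫ = ⟪T u, v⟫ := by
        rw [hsym v u, real_inner_comm]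
      simp only [map_add, inner_add_left, inner_add_right, hvu]
      ring
    have e2 : ⟪T (u - v), u - v⟫ = ⟪T u, u⟫ - 2 * ⟪T u, v⟫ + ⟪T v, v⟫ := by
      have hvu : ⟪T v, u⟫ = ⟪T u, v⟫ := by
        rw [hsym v u, real_inner_comm]
      simp only [map_sub, inner_sub_left, inner_sub_right, hvu]
      ring
    have n1 : ‖u + v‖ ^ 2 = ‖u‖ ^ 2 + 2 * ⟪u, v⟫ + ‖v‖ ^ 2 := norm_add_sq_real u v
    have n2 : ‖u - v‖ ^ 2 = ‖u‖ ^ 2 - 2 * ⟪u, v⟫ + ‖v‖ ^ 2 := norm_sub_sq_real u v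
    rw [e1, n1] at h1
    rw [e2, n2] at h2
    nlinarith [h1, h2]
  refine T.opNorm_le_bound hc fun x => ?_
  by_cases hTx : T x = 0
  · rw [hTx, norm_zero]
    positivity
  by_cases hx : x = 0
  · subst hx; simp at hTx
  have hnx : 0 < ‖x‖ := norm_pos_iff.mpr hx
  have hnTx : 0 < ‖T x‖ := norm_pos_iff.mpr hTx
  set a : ℝ := Real.sqrt (‖T x‖ / ‖x‖) with ha
  have ha2 : a ^ 2 = ‖T x‖ / ‖x‖ := Real.sq_sqrt (by positivity)
  have ha0 : 0 < a := Real.sqrt_pos.mpr (by positivity)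
  have hkey := key (a • x) (a⁻¹ • T x)
  have lhs_eq : ⟪T (a • x), a⁻¹ • T x⟫ = ‖T x‖ ^ 2 := by
    rw [T.map_smul, real_inner_smul_left, real_inner_smul_right,
      real_inner_self_eq_norm_sq]
    field_simp
  have rhs_eq : c / 2 * (‖a • x‖ ^ 2 + ‖a⁻¹ • T x‖ ^ 2) = c * (‖x‖ * ‖T x‖) := by
    rw [norm_smul, norm_smul, mul_pow, mul_pow]
    have : ‖a‖ ^ 2 = a ^ 2 := sq_abs a
    rw [Real.norm_eq_abs, sq_abs, Real.norm_eq_abs, sq_abs, ha2]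
    rw [inv_pow, ha2]
    field_simp
    ring
  rw [lhs_eq, rhs_eq] at hkey
  nlinarith [hkey, hnTx, hnx]

open RealInnerProductSpace in
theorem stmt_6 {n : ℕ} (A A' : Matrix (Fin n) (Fin n) ℝ)
    (hA : A.PosSemidef) (hA' : A'.PosSemidef)
    (ε : ℝ) (hε0 : 0 ≤ ε)
    (hlow : LoewnerLE ((1 + Real.sqrt ε)⁻¹ • A) A')
    (hhigh : LoewnerLE A' ((1 + Real.sqrt ε) • A))
    (hrange : Set.range A'.mulVec ⊆ Set.range A.mulVec)
    (R Rp : Matrix (Fin n) (Fin n) ℝ)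
    (hR : R.PosSemidef) (hRsq : R * R = A)  -- R = A^{1/2}, the PSD square root
    (hRp : IsMoorePenroseInv R Rp)          -- Rp = A^{-1/2}
    : ‖Matrix.toEuclideanCLM (𝕜 := ℝ) (Rp * (A - A') * Rp)‖ ≤ Real.sqrt ε := by
  set s := Real.sqrt ε with hs
  have hs0 : 0 ≤ s := Real.sqrt_nonneg ε
  have hs1 : (0:ℝ) < 1 + s := by linarith
  -- transposes
  have hRT : Rᵀ = R := by
    have := hR.1
    rwa [Matrix.IsHermitian, conjTranspose_eq_transpose_of_trivial] at this
  have hAT : Aᵀ = A := by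
    have := hA.1
    rwa [Matrix.IsHermitian, conjTranspose_eq_transpose_of_trivial] at this
  have hA'T : A'ᵀ = A' := by
    have := hA'.1
    rwa [Matrix.IsHermitian, conjTranspose_eq_transpose_of_trivial] at this
  have hRpT : Rpᵀ = Rp := mp_symm hRT hRp
  set M := Rp * (A - A') * Rp with hM
  have hMT : Mᵀ = M := by
    rw [hM, transpose_mul, transpose_mul, transpose_sub, hAT, hA'T, hRpT,
      Matrix.mul_assoc]
  -- quadratic form bound in matrix language
  have hq : ∀ z : Fin n → ℝ, |z ⬝ᵥ M.mulVec z| ≤ s * (z ⬝ᵥ z) := by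
    intro z
    set w := Rp.mulVec z with hw
    have step1 : z ⬝ᵥ M.mulVec z = w ⬝ᵥ (A - A').mulVec w := by
      rw [hM, ← Matrix.mulVec_mulVec, ← Matrix.mulVec_mulVec,
        Matrix.dotProduct_mulVec z Rp, ← Matrix.mulVec_transpose, hRpT, ← hw]
    set q := w ⬝ᵥ A.mulVec w with hqdef
    set q' := w ⬝ᵥ A'.mulVec w with hq'def
    have hq0 : 0 ≤ q := by
      have := hA.dotProduct_mulVec_nonneg w
      simpa using this
    have hlow' : (1 + s)⁻¹ * q ≤ q' := by
      have := hlow w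
      rwa [Matrix.smul_mulVec, dotProduct_smul, smul_eq_mul] at this
    have hhigh' : q' ≤ (1 + s) * q := by
      have := hhigh w
      rwa [Matrix.smul_mulVec, dotProduct_smul, smul_eq_mul] at this
    have hsub : w ⬝ᵥ (A - A').mulVec w = q - q' := by
      rw [Matrix.sub_mulVec, dotProduct_sub]
    -- |q - q'| ≤ s * q
    have habs : |q - q'| ≤ s * q := by
      have hinv : (1 + s) * (1 + s)⁻¹ = 1 := mul_inv_cancel₀ (ne_of_gt hs1)
      have ht1 : (1 + s)⁻¹ ≤ 1 := by
        rw [inv_le_one_iff₀]; right; linarith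
      rw [abs_le]
      constructor
      · nlinarith
      · nlinarith [mul_nonneg (mul_nonneg hs0 (inv_nonneg.mpr hs1.le)) hq0,
          mul_le_of_le_one_right (mul_nonneg hs0 hq0) ht1]
    -- q ≤ z ⬝ᵥ z via projection P = R * Rp
    have hqz : q ≤ z ⬝ᵥ z := by
      set P := R * Rp with hP
      have hPT : Pᵀ = P := hRp.2.2.1
      have hPP : P * P = P := by
        rw [hP, Matrix.mul_assoc, ← Matrix.mul_assoc Rp R Rp, hRp.2.1]
      set p := P.mulVec z with hp
      have hq_eq : q = p ⬝ᵥ p := by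
        rw [hqdef, ← hRsq, ← Matrix.mulVec_mulVec,
          Matrix.dotProduct_mulVec w R, ← Matrix.mulVec_transpose, hRT,
          hw, Matrix.mulVec_mulVec, ← hP, ← hp]
      have hpz : p ⬝ᵥ p = p ⬝ᵥ z := by
        conv_lhs => rw [hp]
        rw [Matrix.dotProduct_mulVec p P, ← Matrix.mulVec_transpose, hPT, hp,
          Matrix.mulVec_mulVec, hPP]
      have hzp : z ⬝ᵥ p = p ⬝ᵥ p := by rw [dotProduct_comm, hpz]
      have hdiff : (z - p) ⬝ᵥ (z - p) = z ⬝ᵥ z - p ⬝ᵥ p := by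
        rw [sub_dotProduct, dotProduct_sub, dotProduct_sub, hzp, dotProduct_comm p z, hzp]
        ring
      have hnn : 0 ≤ (z - p) ⬝ᵥ (z - p) :=
        Finset.sum_nonneg fun i _ => mul_self_nonneg _
      rw [hq_eq]
      linarith [hdiff ▸ hnn]
    calc |z ⬝ᵥ M.mulVec z| = |q - q'| := by rw [step1, hsub]
      _ ≤ s * q := habs
      _ ≤ s * (z ⬝ᵥ z) := by exact mul_le_mul_of_nonneg_left hqz hs0
  -- conclude via the operator-norm lemma
  set T := Matrix.toEuclideanCLM (𝕜 := ℝ) M with hT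
  have hTapp : ∀ x : EuclideanSpace ℝ (Fin n),
      WithLp.equiv 2 _ (T x) = M.mulVec (WithLp.equiv 2 _ x) :=
    fun x => Matrix.ofLp_toEuclideanCLM M x
  have hinner : ∀ x y : EuclideanSpace ℝ (Fin n),
      ⟪x, y⟫ = (WithLp.equiv 2 _ x) ⬝ᵥ (WithLp.equiv 2 _ y) := by
    intro x y
    simp [PiLp.inner_apply, dotProduct, RCLike.inner_apply, mul_comm]
  have hdmv : ∀ (a b : Fin n → ℝ), (M.mulVec a) ⬝ᵥ b = a ⬝ᵥ M.mulVec b := by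
    intro a b
    rw [dotProduct_comm, Matrix.dotProduct_mulVec b M, ← Matrix.mulVec_transpose, hMT,
      dotProduct_comm]
  have hsym : ∀ x y : EuclideanSpace ℝ (Fin n), ⟪T x, y⟫ = ⟪x, T y⟫ := by
    intro x y
    rw [hinner, hinner, hTapp, hTapp, hdmv]
  have hquad : ∀ x : EuclideanSpace ℝ (Fin n), |⟪T x, x⟫| ≤ s * ‖x‖ ^ 2 := by
    intro x
    have hnorm : ‖x‖ ^ 2 = (WithLp.equiv 2 _ x) ⬝ᵥ (WithLp.equiv 2 _ x) := by
      rw [← real_inner_self_eq_norm_sq, hinner]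
    rw [hinner, hTapp, hnorm, dotProduct_comm]
    exact hq _
  exact opnorm_le_of_quadform T hsym hs0 hquad
end

section
/- For a symmetric PSD matrix A and a symmetric matrix S, the relation (1+δ)^{-1} A⁺ ⪯ S ⪯ (1+δ) A⁺ (with δ > 0, S PSD, and Range(S) = Range(A⁺)) holds if and only if (1+δ)^{-1} A ⪯ S⁺ ⪯ (1+δ) A. -/
open Matrix

namespace MPaux

variable {n : ℕ}

lemma sym_dot {P : Matrix (Fin n) (Fin n) ℝ} (hP : Pᵀ = P) (u v : Fin n → ℝ) :
    (P *ᵥ u) ⬝ᵥ v = u ⬝ᵥ (P *ᵥ v) := by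
  calc (P *ᵥ u) ⬝ᵥ v = v ⬝ᵥ (P *ᵥ u) := dotProduct_comm _ _
    _ = (v ᵥ* P) ⬝ᵥ u := dotProduct_mulVec _ _ _
    _ = (Pᵀ *ᵥ v) ⬝ᵥ u := by rw [mulVec_transpose]
    _ = (P *ᵥ v) ⬝ᵥ u := by rw [hP]
    _ = u ⬝ᵥ (P *ᵥ v) := dotProduct_comm _ _

lemma mp_unique {A B C : Matrix (Fin n) (Fin n) ℝ}
    (hB : IsMoorePenroseInv A B) (hC : IsMoorePenroseInv A C) : B = C := by
  obtain ⟨b1, b2, b3, b4⟩ := hB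
  obtain ⟨c1, c2, c3, c4⟩ := hC
  have hab : A * B = A * C := by
    calc A * B = (A * B)ᵀ := b3.symm
      _ = ((A * C * A) * B)ᵀ := by rw [c1]
      _ = ((A * C) * (A * B))ᵀ := by rw [Matrix.mul_assoc (A * C) A B]
      _ = (A * B)ᵀ * (A * C)ᵀ := Matrix.transpose_mul _ _
      _ = (A * B) * (A * C) := by rw [b3, c3]
      _ = (A * B * A) * C := by noncomm_ring
      _ = A * C := by rw [b1]
  have hba : B * A = C * A := by
    calc B * A = (B * A)ᵀ := b4.symm
      _ = (B * (A * C * A))ᵀ := by rw [c1]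
      _ = ((B * A) * (C * A))ᵀ := by noncomm_ring
      _ = (C * A)ᵀ * (B * A)ᵀ := Matrix.transpose_mul _ _
      _ = (C * A) * (B * A) := by rw [b4, c4]
      _ = C * (A * B * A) := by noncomm_ring
      _ = C * A := by rw [b1]
  calc B = B * A * B := b2.symm
    _ = (C * A) * B := by rw [hba]
    _ = C * (A * B) := Matrix.mul_assoc _ _ _
    _ = C * (A * C) := by rw [hab]
    _ = C * A * C := (Matrix.mul_assoc _ _ _).symm
    _ = C := c2

lemma mp_transpose {A Ap : Matrix (Fin n) (Fin n) ℝ} (hA : Aᵀ = A)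
    (h : IsMoorePenroseInv A Ap) : Apᵀ = Ap := by
  obtain ⟨a1, a2, a3, a4⟩ := h
  have e1 : A * Apᵀ = Ap * A := by
    calc A * Apᵀ = Aᵀᵀ * Apᵀ := by rw [Matrix.transpose_transpose]
      _ = (Ap * Aᵀ)ᵀ := (Matrix.transpose_mul _ _).symm
      _ = (Ap * A)ᵀ := by rw [hA]
      _ = Ap * A := a4
  have e2 : Apᵀ * A = A * Ap := by
    calc Apᵀ * A = Apᵀ * Aᵀᵀ := by rw [Matrix.transpose_transpose]
      _ = (Aᵀ * Ap)ᵀ := (Matrix.transpose_mul _ _).symm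
      _ = (A * Ap)ᵀ := by rw [hA]
      _ = A * Ap := a3
  have ht : IsMoorePenroseInv A Apᵀ := by
    refine ⟨?_, ?_, ?_, ?_⟩
    · have := congrArg Matrix.transpose a1
      simpa [Matrix.transpose_mul, hA, Matrix.mul_assoc] using this
    · have := congrArg Matrix.transpose a2
      simpa [Matrix.transpose_mul, hA, Matrix.mul_assoc] using this
    · rw [e1]; exact a4
    · rw [e2]; exact a3
  exact (mp_unique ⟨a1, a2, a3, a4⟩ ht).symm

lemma mp_swap {A Ap : Matrix (Fin n) (Fin n) ℝ} (h : IsMoorePenroseInv A Ap) :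
    IsMoorePenroseInv Ap A := ⟨h.2.1, h.1, h.2.2.2, h.2.2.1⟩

lemma smul_mul_smul_mat {x y : ℝ} (B C : Matrix (Fin n) (Fin n) ℝ) :
    (x • B) * (y • C) = (x * y) • (B * C) := by
  rw [Matrix.smul_mul, Matrix.mul_smul, smul_smul]

lemma mp_smul {A Ap : Matrix (Fin n) (Fin n) ℝ} {c : ℝ} (hc : c ≠ 0)
    (h : IsMoorePenroseInv A Ap) : IsMoorePenroseInv (c • A) (c⁻¹ • Ap) := by
  obtain ⟨a1, a2, a3, a4⟩ := h
  refine ⟨?_, ?_, ?_, ?_⟩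
  · calc (c • A) * (c⁻¹ • Ap) * (c • A) = ((c * c⁻¹) • (A * Ap)) * (c • A) := by
          rw [smul_mul_smul_mat]
      _ = ((c * c⁻¹) * c) • (A * Ap * A) := by rw [smul_mul_smul_mat]
      _ = c • A := by rw [a1, mul_inv_cancel₀ hc, one_mul]
  · calc (c⁻¹ • Ap) * (c • A) * (c⁻¹ • Ap) = ((c⁻¹ * c) • (Ap * A)) * (c⁻¹ • Ap) := by
          rw [smul_mul_smul_mat]
      _ = ((c⁻¹ * c) * c⁻¹) • (Ap * A * Ap) := by rw [smul_mul_smul_mat]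
      _ = c⁻¹ • Ap := by rw [a2, inv_mul_cancel₀ hc, one_mul]
  · rw [smul_mul_smul_mat, Matrix.transpose_smul, a3]
  · rw [smul_mul_smul_mat, Matrix.transpose_smul, a4]

lemma mp_comm {A Ap : Matrix (Fin n) (Fin n) ℝ} (hA : Aᵀ = A) (hAp : Apᵀ = Ap)
    (h : IsMoorePenroseInv A Ap) : Ap * A = A * Ap := by
  calc Ap * A = (Ap * A)ᵀ := h.2.2.2.symm
    _ = Aᵀ * Apᵀ := Matrix.transpose_mul _ _
    _ = A * Ap := by rw [hA, hAp]

lemma range_mp {A Ap : Matrix (Fin n) (Fin n) ℝ} (hA : Aᵀ = A)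
    (h : IsMoorePenroseInv A Ap) : Set.range Ap.mulVec = Set.range A.mulVec := by
  have hAps : Apᵀ = Ap := mp_transpose hA h
  have hcomm := mp_comm hA hAps h
  obtain ⟨a1, a2, a3, a4⟩ := h
  ext v
  constructor
  · rintro ⟨z, rfl⟩
    refine ⟨(Ap * Ap) *ᵥ z, ?_⟩
    rw [Matrix.mulVec_mulVec, ← Matrix.mul_assoc, ← hcomm]
    rw [show Ap * A * Ap = Ap from a2]
  · rintro ⟨z, rfl⟩
    refine ⟨(A * A) *ᵥ z, ?_⟩
    rw [Matrix.mulVec_mulVec, ← Matrix.mul_assoc, hcomm]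
    rw [show A * Ap * A = A from a1]

lemma range_smul {A : Matrix (Fin n) (Fin n) ℝ} {c : ℝ} (hc : c ≠ 0) :
    Set.range (c • A).mulVec = Set.range A.mulVec := by
  ext v
  constructor
  · rintro ⟨z, rfl⟩
    exact ⟨c • z, by rw [Matrix.mulVec_smul, Matrix.smul_mulVec]⟩
  · rintro ⟨z, rfl⟩
    refine ⟨c⁻¹ • z, ?_⟩
    rw [Matrix.mulVec_smul, Matrix.smul_mulVec, smul_smul, inv_mul_cancel₀ hc, one_smul]

lemma mp_pos {A Ap : Matrix (Fin n) (Fin n) ℝ} (hA : Aᵀ = A)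
    (hApos : ∀ v, 0 ≤ v ⬝ᵥ A *ᵥ v) (h : IsMoorePenroseInv A Ap) :
    ∀ v, 0 ≤ v ⬝ᵥ Ap *ᵥ v := by
  have hAps : Apᵀ = Ap := mp_transpose hA h
  intro v
  have e : v ⬝ᵥ Ap *ᵥ v = (Ap *ᵥ v) ⬝ᵥ (A *ᵥ (Ap *ᵥ v)) := by
    calc v ⬝ᵥ Ap *ᵥ v = v ⬝ᵥ (Ap * A * Ap) *ᵥ v := by rw [h.2.1]
      _ = v ⬝ᵥ (Ap *ᵥ ((A * Ap) *ᵥ v)) := by rw [Matrix.mulVec_mulVec, Matrix.mul_assoc]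
      _ = (Ap *ᵥ v) ⬝ᵥ ((A * Ap) *ᵥ v) := (sym_dot hAps _ _).symm
      _ = (Ap *ᵥ v) ⬝ᵥ (A *ᵥ (Ap *ᵥ v)) := by rw [← Matrix.mulVec_mulVec]
  rw [e]
  exact hApos _

lemma proj_unique {P Q : Matrix (Fin n) (Fin n) ℝ} (hPs : Pᵀ = P) (hQs : Qᵀ = Q)
    (hPP : ∀ v, P *ᵥ (P *ᵥ v) = P *ᵥ v) (hQQ : ∀ v, Q *ᵥ (Q *ᵥ v) = Q *ᵥ v)
    (hPQ : ∀ v, P *ᵥ (Q *ᵥ v) = Q *ᵥ v) (hQP : ∀ v, Q *ᵥ (P *ᵥ v) = P *ᵥ v)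
    (z : Fin n → ℝ) : P *ᵥ z = Q *ᵥ z := by
  have e1 : (P *ᵥ z) ⬝ᵥ (Q *ᵥ z) = (Q *ᵥ z) ⬝ᵥ (Q *ᵥ z) := by
    calc (P *ᵥ z) ⬝ᵥ (Q *ᵥ z) = z ⬝ᵥ (P *ᵥ (Q *ᵥ z)) := sym_dot hPs _ _
      _ = z ⬝ᵥ (Q *ᵥ (Q *ᵥ z)) := by rw [hPQ, hQQ]
      _ = (Q *ᵥ z) ⬝ᵥ (Q *ᵥ z) := (sym_dot hQs _ _).symm
  have e2 : (Q *ᵥ z) ⬝ᵥ (P *ᵥ z) = (P *ᵥ z) ⬝ᵥ (P *ᵥ z) := by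
    calc (Q *ᵥ z) ⬝ᵥ (P *ᵥ z) = z ⬝ᵥ (Q *ᵥ (P *ᵥ z)) := sym_dot hQs _ _
      _ = z ⬝ᵥ (P *ᵥ (P *ᵥ z)) := by rw [hQP, hPP]
      _ = (P *ᵥ z) ⬝ᵥ (P *ᵥ z) := (sym_dot hPs _ _).symm
  have e3 : (P *ᵥ z) ⬝ᵥ (Q *ᵥ z) = (Q *ᵥ z) ⬝ᵥ (P *ᵥ z) := dotProduct_comm _ _
  have hzero : (P *ᵥ z - Q *ᵥ z) ⬝ᵥ (P *ᵥ z - Q *ᵥ z) = 0 := by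
    rw [sub_dotProduct, dotProduct_sub, dotProduct_sub]
    linarith
  have := dotProduct_self_eq_zero.mp hzero
  exact sub_eq_zero.mp this

lemma pinv_absorb_left {N Np : Matrix (Fin n) (Fin n) ℝ}
    (h : IsMoorePenroseInv N Np) : Np * (N * Np) = Np := by
  rw [← Matrix.mul_assoc]; exact h.2.1

lemma pinv_absorb_right {N Np : Matrix (Fin n) (Fin n) ℝ} (hNps : Npᵀ = Np)
    (h : IsMoorePenroseInv N Np) : (N * Np) * Np = Np := by
  have ht : ((N * Np) * Np)ᵀ = Np := by
    rw [Matrix.transpose_mul, hNps, h.2.2.1, pinv_absorb_left h]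
  calc (N * Np) * Np = (((N * Np) * Np)ᵀ)ᵀ := (Matrix.transpose_transpose _).symm
    _ = Npᵀ := by rw [ht]
    _ = Np := hNps

/-- Key lemma: for symmetric `M, N` with `M` PSD, equal ranges, `M ⪯ N` implies `N⁺ ⪯ M⁺`. -/
lemma key {M N Mp Np : Matrix (Fin n) (Fin n) ℝ} (hMs : Mᵀ = M) (hNs : Nᵀ = N)
    (hMpos : ∀ v, 0 ≤ v ⬝ᵥ M *ᵥ v)
    (hMp : IsMoorePenroseInv M Mp) (hNp : IsMoorePenroseInv N Np)
    (hrange : Set.range M.mulVec = Set.range N.mulVec)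
    (hle : LoewnerLE M N) : LoewnerLE Np Mp := by
  have hMps : Mpᵀ = Mp := mp_transpose hMs hMp
  have hNps : Npᵀ = Np := mp_transpose hNs hNp
  have m1 := hMp.1
  have n1 := hNp.1
  have pM1 : Mp * (M * Mp) = Mp := pinv_absorb_left hMp
  have pM2 : (M * Mp) * Mp = Mp := pinv_absorb_right hMps hMp
  have pN1 : Np * (N * Np) = Np := pinv_absorb_left hNp
  have pN2 : (N * Np) * Np = Np := pinv_absorb_right hNps hNp
  intro z
  -- the two projections agree
  have hproj : (M * Mp) *ᵥ z = (N * Np) *ᵥ z := by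
    refine proj_unique hMp.2.2.1 hNp.2.2.1 ?_ ?_ ?_ ?_ z
    · intro v
      rw [Matrix.mulVec_mulVec, show (M * Mp) * (M * Mp) = M * Mp by
        rw [← Matrix.mul_assoc, Matrix.mul_assoc M Mp M, ← Matrix.mul_assoc, m1]]
    · intro v
      rw [Matrix.mulVec_mulVec, show (N * Np) * (N * Np) = N * Np by
        rw [← Matrix.mul_assoc, Matrix.mul_assoc N Np N, ← Matrix.mul_assoc, n1]]
    · intro v
      have hmem : (N * Np) *ᵥ v ∈ Set.range M.mulVec := by
        rw [hrange]
        exact ⟨Np *ᵥ v, by rw [Matrix.mulVec_mulVec]⟩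
      obtain ⟨t, ht⟩ := hmem
      rw [← ht, Matrix.mulVec_mulVec, m1]
    · intro v
      have hmem : (M * Mp) *ᵥ v ∈ Set.range N.mulVec := by
        rw [← hrange]
        exact ⟨Mp *ᵥ v, by rw [Matrix.mulVec_mulVec]⟩
      obtain ⟨t, ht⟩ := hmem
      rw [← ht, Matrix.mulVec_mulVec, n1]
  set y : Fin n → ℝ := (N * Np) *ᵥ z with hy
  set w : Fin n → ℝ := Np *ᵥ y with hw
  set u : Fin n → ℝ := Mp *ᵥ z with hu
  have hyM : y = M *ᵥ u := by
    rw [hu, Matrix.mulVec_mulVec, ← hproj]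
  -- Step B : z ⬝ᵥ Np z = y ⬝ᵥ Np y
  have eNpy : Np *ᵥ y = Np *ᵥ z := by
    rw [hy]; simp only [Matrix.mulVec_mulVec, ← Matrix.mul_assoc]; rw [hNp.2.1]
  have stepB : z ⬝ᵥ Np *ᵥ z = y ⬝ᵥ Np *ᵥ y := by
    calc z ⬝ᵥ Np *ᵥ z = z ⬝ᵥ ((N * Np) * Np) *ᵥ z := by rw [pN2]
      _ = z ⬝ᵥ ((N * Np) *ᵥ (Np *ᵥ z)) := by rw [Matrix.mulVec_mulVec]
      _ = ((N * Np) *ᵥ z) ⬝ᵥ (Np *ᵥ z) := (sym_dot hNp.2.2.1 _ _).symm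
      _ = y ⬝ᵥ Np *ᵥ y := by rw [← hy, eNpy]
  -- c1 : w ⬝ᵥ N w = y ⬝ᵥ Np y
  have c1 : w ⬝ᵥ N *ᵥ w = y ⬝ᵥ Np *ᵥ y := by
    calc w ⬝ᵥ N *ᵥ w = (Np *ᵥ y) ⬝ᵥ (N *ᵥ (Np *ᵥ y)) := by rw [hw]
      _ = y ⬝ᵥ (Np *ᵥ (N *ᵥ (Np *ᵥ y))) := sym_dot hNps _ _
      _ = y ⬝ᵥ ((Np * N * Np) *ᵥ y) := by simp only [Matrix.mulVec_mulVec, ← Matrix.mul_assoc]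
      _ = y ⬝ᵥ Np *ᵥ y := by rw [hNp.2.1]
  -- T1, T2, T3 for the PSD expansion with M
  have T1 : (Mp *ᵥ y) ⬝ᵥ (M *ᵥ (Mp *ᵥ y)) = y ⬝ᵥ Mp *ᵥ y := by
    calc (Mp *ᵥ y) ⬝ᵥ (M *ᵥ (Mp *ᵥ y)) = y ⬝ᵥ (Mp *ᵥ (M *ᵥ (Mp *ᵥ y))) := sym_dot hMps _ _
      _ = y ⬝ᵥ ((Mp * M * Mp) *ᵥ y) := by simp only [Matrix.mulVec_mulVec, ← Matrix.mul_assoc]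
      _ = y ⬝ᵥ Mp *ᵥ y := by rw [hMp.2.1]
  have T2 : (Mp *ᵥ y) ⬝ᵥ (M *ᵥ w) = y ⬝ᵥ w := by
    calc (Mp *ᵥ y) ⬝ᵥ (M *ᵥ w) = y ⬝ᵥ (Mp *ᵥ (M *ᵥ w)) := sym_dot hMps _ _
      _ = (M *ᵥ u) ⬝ᵥ (Mp *ᵥ (M *ᵥ w)) := by rw [← hyM]
      _ = u ⬝ᵥ (M *ᵥ (Mp *ᵥ (M *ᵥ w))) := sym_dot hMs _ _
      _ = u ⬝ᵥ ((M * Mp * M) *ᵥ w) := by simp only [Matrix.mulVec_mulVec, ← Matrix.mul_assoc]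
      _ = u ⬝ᵥ (M *ᵥ w) := by rw [m1]
      _ = (M *ᵥ u) ⬝ᵥ w := (sym_dot hMs _ _).symm
      _ = y ⬝ᵥ w := by rw [← hyM]
  have T3 : w ⬝ᵥ (M *ᵥ (Mp *ᵥ y)) = w ⬝ᵥ y := by
    have : M *ᵥ (Mp *ᵥ y) = y := by
      rw [hyM]; simp only [Matrix.mulVec_mulVec, ← Matrix.mul_assoc]; rw [m1]
    rw [this]
  -- claim3 : 2 (y ⬝ w) - w ⬝ M w ≤ y ⬝ Mp y
  have claim3 : 2 * (y ⬝ᵥ w) - w ⬝ᵥ M *ᵥ w ≤ y ⬝ᵥ Mp *ᵥ y := by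
    have hd := hMpos (Mp *ᵥ y - w)
    have expand : (Mp *ᵥ y - w) ⬝ᵥ (M *ᵥ (Mp *ᵥ y - w)) =
        y ⬝ᵥ Mp *ᵥ y - y ⬝ᵥ w - w ⬝ᵥ y + w ⬝ᵥ M *ᵥ w := by
      rw [Matrix.mulVec_sub, sub_dotProduct, dotProduct_sub,
        dotProduct_sub, T1, T2, T3]
      ring
    rw [expand] at hd
    have hcomm : w ⬝ᵥ y = y ⬝ᵥ w := dotProduct_comm _ _
    linarith
  -- Step D : y ⬝ᵥ Mp y = z ⬝ᵥ Mp z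
  have stepD : y ⬝ᵥ Mp *ᵥ y = z ⬝ᵥ Mp *ᵥ z := by
    have e1 : Mp *ᵥ y = Mp *ᵥ z := by
      rw [← hproj]; simp only [Matrix.mulVec_mulVec, ← Matrix.mul_assoc]; rw [hMp.2.1]
    calc y ⬝ᵥ Mp *ᵥ y = y ⬝ᵥ Mp *ᵥ z := by rw [e1]
      _ = ((M * Mp) *ᵥ z) ⬝ᵥ (Mp *ᵥ z) := by rw [hproj]
      _ = z ⬝ᵥ ((M * Mp) *ᵥ (Mp *ᵥ z)) := sym_dot hMp.2.2.1 _ _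
      _ = z ⬝ᵥ ((M * Mp * Mp) *ᵥ z) := by simp only [Matrix.mulVec_mulVec, ← Matrix.mul_assoc]
      _ = z ⬝ᵥ Mp *ᵥ z := by rw [pM2]
  -- assemble
  have hlew := hle w
  have hyw : y ⬝ᵥ Np *ᵥ y = 2 * (y ⬝ᵥ w) - w ⬝ᵥ N *ᵥ w := by
    rw [c1]
    have : y ⬝ᵥ w = y ⬝ᵥ Np *ᵥ y := by rw [hw]
    linarith
  calc z ⬝ᵥ Np *ᵥ z = y ⬝ᵥ Np *ᵥ y := stepB
    _ = 2 * (y ⬝ᵥ w) - w ⬝ᵥ N *ᵥ w := hyw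
    _ ≤ 2 * (y ⬝ᵥ w) - w ⬝ᵥ M *ᵥ w := by linarith
    _ ≤ y ⬝ᵥ Mp *ᵥ y := claim3
    _ = z ⬝ᵥ Mp *ᵥ z := stepD

end MPaux

open MPaux

theorem stmt_7 {n : ℕ} (A Ap S Sp : Matrix (Fin n) (Fin n) ℝ)
    (hA : A.PosSemidef) (hAp : IsMoorePenroseInv A Ap)
    (hS : S.PosSemidef) (hSp : IsMoorePenroseInv S Sp)
    (hrange : Set.range S.mulVec = Set.range Ap.mulVec)
    (δ : ℝ) (hδ : 0 < δ) :
    (LoewnerLE ((1 + δ)⁻¹ • Ap) S ∧ LoewnerLE S ((1 + δ) • Ap)) ↔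
      (LoewnerLE ((1 + δ)⁻¹ • A) Sp ∧ LoewnerLE Sp ((1 + δ) • A)) := by
  have hδ1 : (0:ℝ) < 1 + δ := by linarith
  have hne : (1 + δ : ℝ) ≠ 0 := ne_of_gt hδ1
  have hne' : ((1 + δ : ℝ))⁻¹ ≠ 0 := inv_ne_zero hne
  have hnn : (0:ℝ) ≤ 1 + δ := le_of_lt hδ1
  have hnn' : (0:ℝ) ≤ (1 + δ)⁻¹ := le_of_lt (inv_pos.mpr hδ1)
  have hAs : Aᵀ = A := hA.1
  have hSs : Sᵀ = S := hS.1
  have hAps : Apᵀ = Ap := mp_transpose hAs hAp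
  have hSps : Spᵀ = Sp := mp_transpose hSs hSp
  have hApos : ∀ v, 0 ≤ v ⬝ᵥ A *ᵥ v := fun v => by simpa using hA.dotProduct_mulVec_nonneg v
  have hSpos : ∀ v, 0 ≤ v ⬝ᵥ S *ᵥ v := fun v => by simpa using hS.dotProduct_mulVec_nonneg v
  have hAppos : ∀ v, 0 ≤ v ⬝ᵥ Ap *ᵥ v := mp_pos hAs hApos hAp
  have hSppos : ∀ v, 0 ≤ v ⬝ᵥ Sp *ᵥ v := mp_pos hSs hSpos hSp
  have rA : Set.range Ap.mulVec = Set.range A.mulVec := range_mp hAs hAp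
  have rS : Set.range Sp.mulVec = Set.range S.mulVec := range_mp hSs hSp
  -- various smul facts
  have smulApS : ((1 + δ)⁻¹ • Ap)ᵀ = (1 + δ)⁻¹ • Ap := by rw [Matrix.transpose_smul, hAps]
  have smulApS' : ((1 + δ) • Ap)ᵀ = (1 + δ) • Ap := by rw [Matrix.transpose_smul, hAps]
  have smulAS : ((1 + δ)⁻¹ • A)ᵀ = (1 + δ)⁻¹ • A := by rw [Matrix.transpose_smul, hAs]
  have smulAS' : ((1 + δ) • A)ᵀ = (1 + δ) • A := by rw [Matrix.transpose_smul, hAs]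
  have pos_smul : ∀ (c : ℝ), 0 ≤ c → ∀ (B : Matrix (Fin n) (Fin n) ℝ),
      (∀ v, 0 ≤ v ⬝ᵥ B *ᵥ v) → ∀ v, 0 ≤ v ⬝ᵥ (c • B) *ᵥ v := by
    intro c hc B hB v
    rw [Matrix.smul_mulVec]
    have : v ⬝ᵥ c • (B *ᵥ v) = c * (v ⬝ᵥ B *ᵥ v) := by
      rw [dotProduct_smul]; rfl
    rw [this]
    exact mul_nonneg hc (hB v)
  -- MP inverse pairs
  have mpinv1 : IsMoorePenroseInv ((1 + δ)⁻¹ • Ap) ((1 + δ) • A) := by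
    have := mp_smul hne' (mp_swap hAp)
    rwa [inv_inv] at this
  have mpinv2 : IsMoorePenroseInv ((1 + δ) • Ap) ((1 + δ)⁻¹ • A) := mp_smul hne (mp_swap hAp)
  have mpinv3 : IsMoorePenroseInv ((1 + δ)⁻¹ • A) ((1 + δ) • Ap) := by
    have := mp_smul hne' hAp
    rwa [inv_inv] at this
  have mpinv4 : IsMoorePenroseInv ((1 + δ) • A) ((1 + δ)⁻¹ • Ap) := mp_smul hne hAp
  constructor
  · rintro ⟨h1, h2⟩
    constructor
    · -- LoewnerLE ((1+δ)⁻¹ • A) Sp, via key with M = S, N = (1+δ) • Ap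
      refine key hSs smulApS' hSpos hSp mpinv2 ?_ h2
      rw [hrange, range_smul hne]
    · -- LoewnerLE Sp ((1+δ) • A), via key with M = (1+δ)⁻¹ • Ap, N = S
      refine key smulApS hSs (pos_smul _ hnn' _ hAppos) mpinv1 hSp ?_ h1
      rw [range_smul hne', hrange]
  · rintro ⟨b1, b2⟩
    constructor
    · -- LoewnerLE ((1+δ)⁻¹ • Ap) S, via key with M = Sp, N = (1+δ) • A
      refine key hSps smulAS' hSppos (mp_swap hSp) mpinv4 ?_ b2
      rw [rS, hrange, rA, range_smul hne]
    · -- LoewnerLE S ((1+δ) • Ap), via key with M = (1+δ)⁻¹ • A, N = Sp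
      refine key smulAS hSps (pos_smul _ hnn' _ hApos) mpinv3 (mp_swap hSp) ?_ b1
      rw [range_smul hne', ← rA, ← hrange, rS]
end

section
/- Let L be a symmetric PSD matrix and N a symmetric PSD matrix with (1/2) N⁺ ⪯ L ⪯ 2 N⁺ and Range(N) = Range(L). Then (1/2) N^{1/2} Σ_{k=0}^{∞} (I - (1/2) N^{1/2} L N^{1/2})^k N^{1/2} x = L⁺ x for every x (where the series is interpreted on Range(L), on which it converges). -/
open Matrix Filter

section Aux

variable {n : ℕ}

private lemma aux_eq_of_mulVec_eq {A B : Matrix (Fin n) (Fin n) ℝ}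
    (h : ∀ v, A *ᵥ v = B *ᵥ v) : A = B := by
  ext i j
  have := congrFun (h (Pi.single j 1)) i
  simpa [Matrix.mulVec_single] using this

private lemma aux_vecMul_eq {R : Matrix (Fin n) (Fin n) ℝ} (hRt : Rᵀ = R) (z : Fin n → ℝ) :
    z ᵥ* R = R *ᵥ z := by
  conv_lhs => rw [← hRt]
  exact Matrix.vecMul_transpose R z

private lemma aux_dot_sandwich (R M : Matrix (Fin n) (Fin n) ℝ) (hRt : Rᵀ = R) (z : Fin n → ℝ) :
    z ⬝ᵥ (R * M * R) *ᵥ z = (R *ᵥ z) ⬝ᵥ M *ᵥ (R *ᵥ z) := by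
  rw [← Matrix.mulVec_mulVec, ← Matrix.mulVec_mulVec, Matrix.dotProduct_mulVec,
    aux_vecMul_eq hRt]

/-- Uniqueness of the Moore–Penrose pseudoinverse. -/
private lemma aux_mp_unique (A B C : Matrix (Fin n) (Fin n) ℝ)
    (hB : IsMoorePenroseInv A B) (hC : IsMoorePenroseInv A C) : B = C := by
  obtain ⟨hB1, hB2, hB3, hB4⟩ := hB
  obtain ⟨hC1, hC2, hC3, hC4⟩ := hC
  have hAB : A * B = A * C := by
    have hAt : Aᵀ = Aᵀ * (A * C) := by
      conv_lhs => rw [← hC1]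
      rw [Matrix.transpose_mul, hC3]
    calc A * B = (A * B)ᵀ := hB3.symm
      _ = Bᵀ * Aᵀ := by rw [Matrix.transpose_mul]
      _ = Bᵀ * (Aᵀ * (A * C)) := by rw [← hAt]
      _ = (Bᵀ * Aᵀ) * (A * C) := by rw [Matrix.mul_assoc]
      _ = (A * B)ᵀ * (A * C) := by rw [Matrix.transpose_mul]
      _ = (A * B) * (A * C) := by rw [hB3]
      _ = A * C := by rw [← Matrix.mul_assoc, hB1]
  have hBA : B * A = C * A := by
    have hAt : Aᵀ = (C * A) * Aᵀ := by
      conv_lhs => rw [← hC1]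
      rw [Matrix.mul_assoc, Matrix.transpose_mul, hC4]
    calc B * A = (B * A)ᵀ := hB4.symm
      _ = Aᵀ * Bᵀ := by rw [Matrix.transpose_mul]
      _ = ((C * A) * Aᵀ) * Bᵀ := by rw [← hAt]
      _ = (C * A) * (Aᵀ * Bᵀ) := by rw [Matrix.mul_assoc]
      _ = (C * A) * (B * A)ᵀ := by rw [Matrix.transpose_mul]
      _ = (C * A) * (B * A) := by rw [hB4]
      _ = C * ((A * B) * A) := by
          rw [Matrix.mul_assoc, ← Matrix.mul_assoc A B A]
      _ = C * A := by rw [hB1]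
  calc B = B * A * B := hB2.symm
    _ = (C * A) * B := by rw [hBA]
    _ = C * (A * B) := by rw [Matrix.mul_assoc]
    _ = C * (A * C) := by rw [hAB]
    _ = C * A * C := by rw [Matrix.mul_assoc]
    _ = C := hC2

/-- The pseudoinverse of a symmetric matrix is symmetric. -/
private lemma aux_mp_symm {A Ap : Matrix (Fin n) (Fin n) ℝ} (hAt : Aᵀ = A)
    (h : IsMoorePenroseInv A Ap) : Apᵀ = Ap := by
  obtain ⟨h1, h2, h3, h4⟩ := h
  have hT : IsMoorePenroseInv A Apᵀ := by
    refine ⟨?_, ?_, ?_, ?_⟩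
    · calc A * Apᵀ * A = Aᵀ * Apᵀ * Aᵀ := by rw [hAt]
        _ = (A * (Ap * A))ᵀ := by
            simp only [Matrix.transpose_mul, Matrix.transpose_transpose, Matrix.mul_assoc]
        _ = (A * Ap * A)ᵀ := by rw [Matrix.mul_assoc]
        _ = A := by rw [h1, hAt]
    · calc Apᵀ * A * Apᵀ = Apᵀ * Aᵀ * Apᵀ := by rw [hAt]
        _ = (Ap * (A * Ap))ᵀ := by
            simp only [Matrix.transpose_mul, Matrix.transpose_transpose, Matrix.mul_assoc]
        _ = (Ap * A * Ap)ᵀ := by rw [Matrix.mul_assoc]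
        _ = Apᵀ := by rw [h2]
    · calc (A * Apᵀ)ᵀ = (Aᵀ * Apᵀ)ᵀ := by rw [hAt]
        _ = ((Ap * A)ᵀ)ᵀ := by
            simp only [Matrix.transpose_mul, Matrix.transpose_transpose]
        _ = Ap * A := by rw [Matrix.transpose_transpose]
        _ = (Ap * A)ᵀ := h4.symm
        _ = Aᵀ * Apᵀ := by rw [Matrix.transpose_mul]
        _ = A * Apᵀ := by rw [hAt]
    · calc (Apᵀ * A)ᵀ = (Apᵀ * Aᵀ)ᵀ := by rw [hAt]
        _ = ((A * Ap)ᵀ)ᵀ := by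
            simp only [Matrix.transpose_mul, Matrix.transpose_transpose]
        _ = A * Ap := by rw [Matrix.transpose_transpose]
        _ = (A * Ap)ᵀ := h3.symm
        _ = Apᵀ * Aᵀ := by rw [Matrix.transpose_mul]
        _ = Apᵀ * A := by rw [hAt]
  exact aux_mp_unique A Apᵀ Ap hT ⟨h1, h2, h3, h4⟩


private lemma aux_dot_sq {A : Matrix (Fin n) (Fin n) ℝ} (hAt : Aᵀ = A) (v : Fin n → ℝ) :
    v ⬝ᵥ (A * A) *ᵥ v = (A *ᵥ v) ⬝ᵥ (A *ᵥ v) := by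
  rw [← Matrix.mulVec_mulVec, Matrix.dotProduct_mulVec, aux_vecMul_eq hAt]

private lemma aux_dot_self_nonneg (v : Fin n → ℝ) : 0 ≤ v ⬝ᵥ v :=
  Finset.sum_nonneg fun i _ => mul_self_nonneg (v i)

/-- Operator-norm-type bound: if `0 ⪯ S ⪯ c•1` then `‖S v‖² ≤ c² ‖v‖²`. -/
private lemma aux_opnorm {S : Matrix (Fin n) (Fin n) ℝ} (hS : S.PosSemidef) {c : ℝ} (hc : 0 ≤ c)
    (hle : ((c • (1 : Matrix (Fin n) (Fin n) ℝ)) - S).PosSemidef) (v : Fin n → ℝ) :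
    (S *ᵥ v) ⬝ᵥ (S *ᵥ v) ≤ c ^ 2 * (v ⬝ᵥ v) := by
  have hSt : Sᵀ = S := (Matrix.conjTranspose_eq_transpose_of_trivial S).symm.trans hS.1
  have hq : ∀ w : Fin n → ℝ, w ⬝ᵥ S *ᵥ w ≤ c * (w ⬝ᵥ w) := by
    intro w
    have h := hle.dotProduct_mulVec_nonneg w
    simp only [star_trivial] at h
    rw [Matrix.sub_mulVec, dotProduct_sub, Matrix.smul_mulVec, Matrix.one_mulVec,
      dotProduct_smul, smul_eq_mul] at h
    linarith
  obtain ⟨s, hss, hst⟩ : ∃ s : Matrix (Fin n) (Fin n) ℝ, s * s = S ∧ sᵀ = s :=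
    by
      letI : PartialOrder (Matrix (Fin n) (Fin n) ℝ) := Matrix.instPartialOrder
      letI : StarOrderedRing (Matrix (Fin n) (Fin n) ℝ) := Matrix.instStarOrderedRing
      letI : NonnegSpectrumClass ℝ (Matrix (Fin n) (Fin n) ℝ) := Matrix.instNonnegSpectrumClass
      obtain ⟨X, hX, -, hXX⟩ := CFC.exists_sqrt_of_isSelfAdjoint_of_quasispectrumRestricts
        hS.isHermitian (QuasispectrumRestricts.nnreal_of_nonneg hS.nonneg)
      refine ⟨X, ?_, (Matrix.conjTranspose_eq_transpose_of_trivial _).symm.trans hX.star_eq⟩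
      exact hXX
  have hsSs : s * S * s = S * S := by
    rw [← hss]; simp only [Matrix.mul_assoc]
  have hmid : s * ((c • (1 : Matrix (Fin n) (Fin n) ℝ)) - S) * s
      = c • S - S * S := by
    rw [Matrix.mul_sub, Matrix.mul_smul, mul_one, Matrix.sub_mul, Matrix.smul_mul, hss, hsSs]
  have h4 : 0 ≤ (s *ᵥ v) ⬝ᵥ (((c • (1 : Matrix (Fin n) (Fin n) ℝ)) - S) *ᵥ (s *ᵥ v)) := by
    have := hle.dotProduct_mulVec_nonneg (s *ᵥ v)
    simpa only [star_trivial] using this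
  have h5 : 0 ≤ v ⬝ᵥ (c • S - S * S) *ᵥ v := by
    rw [← hmid, aux_dot_sandwich _ _ hst]
    exact h4
  rw [Matrix.sub_mulVec, dotProduct_sub, Matrix.smul_mulVec,
    dotProduct_smul, smul_eq_mul] at h5
  have h6 : v ⬝ᵥ (S * S) *ᵥ v ≤ c * (v ⬝ᵥ S *ᵥ v) := by linarith
  have h7 : c * (v ⬝ᵥ S *ᵥ v) ≤ c * (c * (v ⬝ᵥ v)) :=
    mul_le_mul_of_nonneg_left (hq v) hc
  calc (S *ᵥ v) ⬝ᵥ (S *ᵥ v) = v ⬝ᵥ (S * S) *ᵥ v := (aux_dot_sq hSt v).symm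
    _ ≤ c * (c * (v ⬝ᵥ v)) := le_trans h6 h7
    _ = c ^ 2 * (v ⬝ᵥ v) := by ring

private lemma aux_mulVec_bound (A : Matrix (Fin n) (Fin n) ℝ) :
    ∃ CA : ℝ, 0 ≤ CA ∧ ∀ v, (A *ᵥ v) ⬝ᵥ (A *ᵥ v) ≤ CA * (v ⬝ᵥ v) := by
  refine ⟨∑ i, ∑ j, (A i j) ^ 2, by positivity, fun v => ?_⟩
  have hv : ∀ i, (A *ᵥ v) i * ((A *ᵥ v) i) ≤ (∑ j, (A i j) ^ 2) * (v ⬝ᵥ v) := by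
    intro i
    have hcs := Finset.sum_mul_sq_le_sq_mul_sq Finset.univ (fun j => A i j) v
    have hAv : (A *ᵥ v) i = ∑ j, A i j * v j := rfl
    have hvv : v ⬝ᵥ v = ∑ j, (v j) ^ 2 := by
      simp only [dotProduct, pow_two]
    calc (A *ᵥ v) i * ((A *ᵥ v) i) = (∑ j, A i j * v j) ^ 2 := by rw [hAv]; ring
      _ ≤ (∑ j, (A i j) ^ 2) * ∑ j, (v j) ^ 2 := hcs
      _ = (∑ j, (A i j) ^ 2) * (v ⬝ᵥ v) := by rw [hvv]
  calc (A *ᵥ v) ⬝ᵥ (A *ᵥ v) = ∑ i, (A *ᵥ v) i * (A *ᵥ v) i := rfl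
    _ ≤ ∑ i, (∑ j, (A i j) ^ 2) * (v ⬝ᵥ v) := Finset.sum_le_sum fun i _ => hv i
    _ = (∑ i, ∑ j, (A i j) ^ 2) * (v ⬝ᵥ v) := by rw [Finset.sum_mul]

private lemma aux_norm_le_sqrt (v : Fin n → ℝ) : ‖v‖ ≤ Real.sqrt (v ⬝ᵥ v) := by
  refine (pi_norm_le_iff_of_nonneg (Real.sqrt_nonneg _)).2 fun i => ?_
  rw [Real.norm_eq_abs, ← Real.sqrt_sq_eq_abs]
  apply Real.sqrt_le_sqrt
  calc (v i) ^ 2 = v i * v i := by ring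
    _ ≤ ∑ j, v j * v j := Finset.single_le_sum (fun j _ => mul_self_nonneg (v j))
        (Finset.mem_univ i)
    _ = v ⬝ᵥ v := rfl


end Aux

theorem stmt_16 {n : ℕ} (L N Np Lp R : Matrix (Fin n) (Fin n) ℝ)
    (hL : L.PosSemidef) (hN : N.PosSemidef)
    (hNp : IsMoorePenroseInv N Np) (hLp : IsMoorePenroseInv L Lp)
    (hlow : LoewnerLE ((1 / 2 : ℝ) • Np) L) (hhigh : LoewnerLE L ((2 : ℝ) • Np))
    (hrange : Set.range N.mulVec = Set.range L.mulVec)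
    (hR : R.PosSemidef) (hRsq : R * R = N)   -- R = N^{1/2}
    (x : Fin n → ℝ) :
    Summable (fun k : ℕ =>
      (1 / 2 : ℝ) • R.mulVec
        (((1 - (1 / 2 : ℝ) • (R * L * R)) ^ k).mulVec (R.mulVec x))) ∧
    (∑' k : ℕ,
      (1 / 2 : ℝ) • R.mulVec
        (((1 - (1 / 2 : ℝ) • (R * L * R)) ^ k).mulVec (R.mulVec x)))
      = Lp.mulVec x := by
  classical
  -- transposes
  have hLt : Lᵀ = L := by
    rw [← Matrix.conjTranspose_eq_transpose_of_trivial]; exact hL.1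
  have hNt : Nᵀ = N := by
    rw [← Matrix.conjTranspose_eq_transpose_of_trivial]; exact hN.1
  have hRt : Rᵀ = R := by
    rw [← Matrix.conjTranspose_eq_transpose_of_trivial]; exact hR.1
  have hNpt : Npᵀ = Np := aux_mp_symm hNt hNp
  have hLpt : Lpᵀ = Lp := aux_mp_symm hLt hLp
  obtain ⟨hN1, hN2, hN3, hN4⟩ := hNp
  obtain ⟨hL1, hL2, hL3, hL4⟩ := hLp
  -- the projection P = L * Lp
  set P : Matrix (Fin n) (Fin n) ℝ := L * Lp with hPdef
  have hPt : Pᵀ = P := hL3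
  have hLpL : Lp * L = P := by
    rw [← hL4, Matrix.transpose_mul, hLt, hLpt, hPdef]
  have hPL : P * L = L := by rw [hPdef, Matrix.mul_assoc, ← Matrix.mul_assoc, hL1]
  have hLP : L * P = L := by rw [← hLpL, ← Matrix.mul_assoc, hL1]
  have hPLp : P * Lp = Lp := by rw [← hLpL, hL2]
  have hLpP : Lp * P = Lp := by rw [hPdef, ← Matrix.mul_assoc, hL2]
  have hPP : P * P = P := by rw [hPdef, ← Matrix.mul_assoc, hPL]
  -- the projection Q = N * Np and Q = P
  set Q : Matrix (Fin n) (Fin n) ℝ := N * Np with hQdef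
  have hQt : Qᵀ = Q := hN3
  have hNpN : Np * N = Q := by
    rw [← hN4, Matrix.transpose_mul, hNt, hNpt, hQdef]
  have hQN : Q * N = N := by rw [hQdef, Matrix.mul_assoc, ← Matrix.mul_assoc, hN1]
  have hNQ : N * Q = N := by rw [← hNpN, ← Matrix.mul_assoc, hN1]
  have hQNp : Q * Np = Np := by rw [← hNpN, hN2]
  -- range facts
  have hQL : Q * L = L := by
    apply aux_eq_of_mulVec_eq
    intro v
    have hv : L *ᵥ v ∈ Set.range N.mulVec := by rw [hrange]; exact ⟨v, rfl⟩
    obtain ⟨w, hw⟩ := hv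
    calc (Q * L) *ᵥ v = Q *ᵥ (L *ᵥ v) := (Matrix.mulVec_mulVec v Q L).symm
      _ = Q *ᵥ (N *ᵥ w) := by rw [hw]
      _ = (Q * N) *ᵥ w := Matrix.mulVec_mulVec w Q N
      _ = N *ᵥ w := by rw [hQN]
      _ = L *ᵥ v := hw
  have hPN : P * N = N := by
    apply aux_eq_of_mulVec_eq
    intro v
    have hv : N *ᵥ v ∈ Set.range L.mulVec := by rw [← hrange]; exact ⟨v, rfl⟩
    obtain ⟨w, hw⟩ := hv
    calc (P * N) *ᵥ v = P *ᵥ (N *ᵥ v) := (Matrix.mulVec_mulVec v P N).symm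
      _ = P *ᵥ (L *ᵥ w) := by rw [hw]
      _ = (P * L) *ᵥ w := Matrix.mulVec_mulVec w P L
      _ = L *ᵥ w := by rw [hPL]
      _ = N *ᵥ v := hw
  have hNP : N * P = N := by
    have := congrArg Matrix.transpose hPN
    rwa [Matrix.transpose_mul, hPt, hNt] at this
  -- P * R = R, etc.
  have hPR : P * R = R := by
    have e1 : (P * R) * (R * P) = N := by
      rw [Matrix.mul_assoc P R (R * P), ← Matrix.mul_assoc R R P, hRsq, hNP, hPN]
    have e2 : (P * R) * R = N := by rw [Matrix.mul_assoc, hRsq, hPN]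
    have e3 : R * (R * P) = N := by rw [← Matrix.mul_assoc, hRsq, hNP]
    have hz : (P * R - R) * (P * R - R)ᵀ = 0 := by
      rw [Matrix.transpose_sub, Matrix.transpose_mul, hPt, hRt]
      rw [Matrix.sub_mul, Matrix.mul_sub, Matrix.mul_sub]
      rw [e1, e2, e3, hRsq]
      abel
    have hz2 : P * R - R = 0 := by
      have := (Matrix.self_mul_conjTranspose_eq_zero (A := P * R - R))
      rw [Matrix.conjTranspose_eq_transpose_of_trivial] at this
      exact this.mp hz
    have := sub_eq_zero.mp hz2
    exact this
  have hRP : R * P = R := by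
    have := congrArg Matrix.transpose hPR
    rwa [Matrix.transpose_mul, hPt, hRt] at this
  -- Q = P
  have hQP : Q = P := by
    have h1 : P * Q = Q := by rw [hQdef, ← Matrix.mul_assoc, hPN]
    have h2 : Q * P = P := by rw [hPdef, ← Matrix.mul_assoc, hQL]
    have h3 : Q * P = Q := by
      have := congrArg Matrix.transpose h1
      rwa [Matrix.transpose_mul, hPt, hQt] at this
    rw [← h2, h3]
  have hPNp : P * Np = Np := by rw [← hQP, hQNp]
  -- R * Np * R = P
  have hX : R * Np * R = P := by
    have hXt : (R * Np * R)ᵀ = R * Np * R := by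
      rw [Matrix.transpose_mul, Matrix.transpose_mul, hRt, hNpt, Matrix.mul_assoc]
    have hPX : P * (R * Np * R) = R * Np * R := by
      rw [← Matrix.mul_assoc, ← Matrix.mul_assoc, hPR]
    have hXP : (R * Np * R) * P = R * Np * R := by
      have := congrArg Matrix.transpose hPX
      rwa [Matrix.transpose_mul, hXt, hPt] at this
    have hRN : R * N = N * R := by
      rw [← hRsq, ← Matrix.mul_assoc]
    have hXQ : (R * Np * R) * P = P := by
      calc (R * Np * R) * P
          = R * (Np * (R * (N * Np))) := by
            rw [← hQP, hQdef]; simp only [Matrix.mul_assoc]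
        _ = R * (Np * (R * N * Np)) := by simp only [Matrix.mul_assoc]
        _ = R * (Np * (N * R * Np)) := by rw [hRN]
        _ = R * ((Np * N) * (R * Np)) := by simp only [Matrix.mul_assoc]
        _ = R * (Q * (R * Np)) := by rw [hNpN]
        _ = (R * Q) * (R * Np) := by rw [← Matrix.mul_assoc]
        _ = R * (R * Np) := by rw [hQP, hRP]
        _ = (R * R) * Np := by rw [← Matrix.mul_assoc]
        _ = P := by rw [hRsq, ← hQdef, hQP]
    rw [← hXQ, hXP]
  -- T, S and basic identities
  set T : Matrix (Fin n) (Fin n) ℝ := (1 / 2 : ℝ) • (R * L * R) with hTdef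
  set S : Matrix (Fin n) (Fin n) ℝ := P - T with hSdef
  have hTt : Tᵀ = T := by
    rw [hTdef, Matrix.transpose_smul]
    congr 1
    rw [Matrix.transpose_mul, Matrix.transpose_mul, hRt, hLt, ← Matrix.mul_assoc]
  have hSt : Sᵀ = S := by rw [hSdef, Matrix.transpose_sub, hPt, hTt]
  have hPT : P * T = T := by
    rw [hTdef, Matrix.mul_smul]
    congr 1
    rw [← Matrix.mul_assoc, ← Matrix.mul_assoc, hPR]
  have hTP : T * P = T := by
    rw [hTdef, Matrix.smul_mul]
    congr 1
    rw [Matrix.mul_assoc, hRP]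
  have hPS : P * S = S := by rw [hSdef, Matrix.mul_sub, hPP, hPT]
  have hSP : S * P = S := by rw [hSdef, Matrix.sub_mul, hPP, hTP]
  have hPSkR : ∀ k : ℕ, P * (S ^ k * R) = S ^ k * R := by
    intro k
    induction k with
    | zero => simpa only [pow_zero, one_mul] using hPR
    | succ k ih =>
      rw [pow_succ', Matrix.mul_assoc S (S ^ k) R, ← Matrix.mul_assoc P S (S ^ k * R), hPS]
  have hM1 : ∀ k : ℕ, (1 - T) ^ k * R = S ^ k * R := by
    intro k
    induction k with
    | zero => rfl
    | succ k ih =>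
      rw [pow_succ', pow_succ', Matrix.mul_assoc, Matrix.mul_assoc, ih]
      have h1 : S * (S ^ k * R) = P * (S ^ k * R) - T * (S ^ k * R) := by
        rw [hSdef, Matrix.sub_mul]
      rw [h1, hPSkR, Matrix.sub_mul, one_mul]
  -- key identity
  set G : Matrix (Fin n) (Fin n) ℝ := Np * R * Lp with hGdef
  have hkey : (1 - S) * G = (1 / 2 : ℝ) • (R * P) := by
    have h1 : (1 : Matrix (Fin n) (Fin n) ℝ) - S = (1 - P) + T := by rw [hSdef]; abel
    rw [h1, Matrix.add_mul, Matrix.sub_mul, one_mul]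
    have h2 : P * G = G := by
      rw [hGdef, ← Matrix.mul_assoc, ← Matrix.mul_assoc, hPNp]
    have h3 : T * G = (1 / 2 : ℝ) • (R * P) := by
      rw [hTdef, hGdef, Matrix.smul_mul]
      congr 1
      calc R * L * R * (Np * R * Lp) = (R * L) * ((R * Np * R) * Lp) := by
            simp only [Matrix.mul_assoc]
        _ = (R * L) * (P * Lp) := by rw [hX]
        _ = R * (L * Lp) := by rw [hPLp, Matrix.mul_assoc]
        _ = R * P := by rw [← hPdef]
    rw [h2, h3, sub_self, zero_add]
  -- the sequence u and the telescoping identity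
  set u : ℕ → (Fin n → ℝ) := fun k => (R * S ^ k * G) *ᵥ x with hudef
  have hfk : ∀ k : ℕ,
      (1 / 2 : ℝ) • R *ᵥ ((1 - T) ^ k *ᵥ (R *ᵥ x)) = u k - u (k + 1) := by
    intro k
    have h5 : R * S ^ (k + 1) * G = R * S ^ k * (S * G) := by
      rw [pow_succ]; simp only [Matrix.mul_assoc]
    have h6 : R * S ^ k * ((1 - S) * G) = R * S ^ k * G - R * S ^ k * (S * G) := by
      rw [Matrix.sub_mul (1 : Matrix (Fin n) (Fin n) ℝ) S G, Matrix.one_mul G,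
        Matrix.mul_sub (R * S ^ k) G (S * G)]
    have hmat : (1 / 2 : ℝ) • (R * ((1 - T) ^ k * R)) = R * S ^ k * G - R * S ^ (k + 1) * G := by
      rw [hM1 k, h5, ← h6, hkey, Matrix.mul_smul (R * S ^ k) ((1:ℝ)/2) (R * P), hRP]
      congr 1
      simp only [Matrix.mul_assoc]
    calc (1 / 2 : ℝ) • R *ᵥ ((1 - T) ^ k *ᵥ (R *ᵥ x))
        = (1 / 2 : ℝ) • ((R * ((1 - T) ^ k * R)) *ᵥ x) := by
          simp only [Matrix.mulVec_mulVec]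
      _ = ((1 / 2 : ℝ) • (R * ((1 - T) ^ k * R))) *ᵥ x := by
          rw [← Matrix.smul_mulVec]
      _ = (R * S ^ k * G - R * S ^ (k + 1) * G) *ᵥ x := by rw [hmat]
      _ = u k - u (k + 1) := by
          rw [Matrix.sub_mulVec]
  have hu0 : u 0 = Lp *ᵥ x := by
    have hRG : R * G = Lp := by
      rw [hGdef, ← Matrix.mul_assoc, ← Matrix.mul_assoc, hX, hPLp]
    simp only [hudef]
    rw [pow_zero, mul_one, hRG]
  -- quadratic form facts
  have hdotP : ∀ z, z ⬝ᵥ P *ᵥ z = (R *ᵥ z) ⬝ᵥ Np *ᵥ (R *ᵥ z) := by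
    intro z; rw [← hX]; exact aux_dot_sandwich R Np hRt z
  have hdotT : ∀ z, z ⬝ᵥ T *ᵥ z = (1 / 2 : ℝ) * ((R *ᵥ z) ⬝ᵥ L *ᵥ (R *ᵥ z)) := by
    intro z
    rw [hTdef, Matrix.smul_mulVec, dotProduct_smul, smul_eq_mul,
      aux_dot_sandwich R L hRt]
  have hT_le : ∀ z, z ⬝ᵥ T *ᵥ z ≤ z ⬝ᵥ P *ᵥ z := by
    intro z
    have h := hhigh (R *ᵥ z)
    rw [Matrix.smul_mulVec, dotProduct_smul, smul_eq_mul] at h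
    rw [hdotT, hdotP]; linarith
  have hT_ge : ∀ z, (1 / 4 : ℝ) * (z ⬝ᵥ P *ᵥ z) ≤ z ⬝ᵥ T *ᵥ z := by
    intro z
    have h := hlow (R *ᵥ z)
    rw [Matrix.smul_mulVec, dotProduct_smul, smul_eq_mul] at h
    rw [hdotT, hdotP]; linarith
  have hOneP : ∀ z : Fin n → ℝ, z ⬝ᵥ P *ᵥ z ≤ z ⬝ᵥ z := by
    intro z
    have h1P : ((1 : Matrix (Fin n) (Fin n) ℝ) - P) * (1 - P) = 1 - P := by
      rw [Matrix.mul_sub, mul_one, Matrix.sub_mul, one_mul, hPP]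
      abel
    have h1Pt : ((1 : Matrix (Fin n) (Fin n) ℝ) - P)ᵀ = 1 - P := by
      rw [Matrix.transpose_sub, Matrix.transpose_one, hPt]
    have h2 : 0 ≤ z ⬝ᵥ ((1 : Matrix (Fin n) (Fin n) ℝ) - P) *ᵥ z := by
      conv_rhs => rw [← h1P]
      rw [aux_dot_sq h1Pt]
      exact aux_dot_self_nonneg _
    rw [Matrix.sub_mulVec, dotProduct_sub, Matrix.one_mulVec] at h2
    linarith
  -- S is PSD and bounded by (3/4)•1
  have hSpsd : S.PosSemidef := by
    refine Matrix.posSemidef_iff_dotProduct_mulVec.mpr ⟨?_, ?_⟩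
    · exact (Matrix.conjTranspose_eq_transpose_of_trivial S).trans hSt
    · intro z
      simp only [star_trivial]
      rw [hSdef, Matrix.sub_mulVec, dotProduct_sub]
      have h1 := hT_le z
      linarith
  have hSub : (((3 / 4 : ℝ)) • (1 : Matrix (Fin n) (Fin n) ℝ) - S).PosSemidef := by
    refine Matrix.posSemidef_iff_dotProduct_mulVec.mpr ⟨?_, ?_⟩
    · show ((3 / 4 : ℝ) • (1 : Matrix (Fin n) (Fin n) ℝ) - S)ᴴ = _
      rw [Matrix.conjTranspose_eq_transpose_of_trivial, Matrix.transpose_sub,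
        Matrix.transpose_smul, Matrix.transpose_one, hSt]
    · intro z
      simp only [star_trivial]
      rw [Matrix.sub_mulVec, dotProduct_sub, Matrix.smul_mulVec,
        Matrix.one_mulVec, dotProduct_smul, smul_eq_mul]
      rw [hSdef, Matrix.sub_mulVec, dotProduct_sub]
      have h1 := hT_ge z
      have h2 := hOneP z
      linarith
  -- geometric decay of powers of S
  have hSk : ∀ (k : ℕ) (v : Fin n → ℝ),
      ((S ^ k) *ᵥ v) ⬝ᵥ ((S ^ k) *ᵥ v) ≤ (((3 / 4 : ℝ)) ^ 2) ^ k * (v ⬝ᵥ v) := by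
    intro k
    induction k with
    | zero =>
      intro v
      simp only [pow_zero, Matrix.one_mulVec, one_mul, le_refl]
    | succ k ih =>
      intro v
      have h1 : S ^ (k + 1) *ᵥ v = S *ᵥ (S ^ k *ᵥ v) := by
        rw [Matrix.mulVec_mulVec, ← pow_succ']
      rw [h1]
      calc (S *ᵥ (S ^ k *ᵥ v)) ⬝ᵥ (S *ᵥ (S ^ k *ᵥ v))
          ≤ (3 / 4 : ℝ) ^ 2 * ((S ^ k *ᵥ v) ⬝ᵥ (S ^ k *ᵥ v)) :=
            aux_opnorm hSpsd (by norm_num) hSub _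
        _ ≤ (3 / 4 : ℝ) ^ 2 * ((((3 / 4 : ℝ)) ^ 2) ^ k * (v ⬝ᵥ v)) :=
            mul_le_mul_of_nonneg_left (ih v) (by positivity)
        _ = (((3 / 4 : ℝ)) ^ 2) ^ (k + 1) * (v ⬝ᵥ v) := by ring
  -- norm bound on u
  obtain ⟨CR, hCR0, hCRb⟩ := aux_mulVec_bound R
  set w0 : Fin n → ℝ := G *ᵥ x with hw0def
  have huk : ∀ k, u k = R *ᵥ ((S ^ k) *ᵥ w0) := by
    intro k
    simp only [hudef, hw0def]
    rw [← Matrix.mulVec_mulVec, ← Matrix.mulVec_mulVec]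
  set B : ℝ := Real.sqrt (CR * (w0 ⬝ᵥ w0)) with hBdef
  have hB0 : 0 ≤ B := Real.sqrt_nonneg _
  have hub : ∀ k, ‖u k‖ ≤ B * (3 / 4 : ℝ) ^ k := by
    intro k
    have h2 : (u k) ⬝ᵥ (u k) ≤ CR * ((((3 / 4 : ℝ)) ^ 2) ^ k * (w0 ⬝ᵥ w0)) := by
      rw [huk k]
      exact le_trans (hCRb _) (mul_le_mul_of_nonneg_left (hSk k w0) hCR0)
    have hBB : B ^ 2 = CR * (w0 ⬝ᵥ w0) :=
      Real.sq_sqrt (mul_nonneg hCR0 (aux_dot_self_nonneg w0))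
    have h3 : CR * ((((3 / 4 : ℝ)) ^ 2) ^ k * (w0 ⬝ᵥ w0)) = (B * (3 / 4 : ℝ) ^ k) ^ 2 := by
      rw [mul_pow, hBB, ← pow_mul, ← pow_mul, Nat.mul_comm]
      ring
    calc ‖u k‖ ≤ Real.sqrt ((u k) ⬝ᵥ (u k)) := aux_norm_le_sqrt _
      _ ≤ Real.sqrt ((B * (3 / 4 : ℝ) ^ k) ^ 2) := Real.sqrt_le_sqrt (h2.trans_eq h3)
      _ = |B * (3 / 4 : ℝ) ^ k| := Real.sqrt_sq_eq_abs _
      _ = B * (3 / 4 : ℝ) ^ k := abs_of_nonneg (by positivity)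
  -- summability
  have hFnorm : ∀ k, ‖(1 / 2 : ℝ) • R *ᵥ ((1 - T) ^ k *ᵥ (R *ᵥ x))‖
      ≤ (B + B * (3 / 4)) * (3 / 4 : ℝ) ^ k := by
    intro k
    rw [hfk k]
    calc ‖u k - u (k + 1)‖ ≤ ‖u k‖ + ‖u (k + 1)‖ := norm_sub_le _ _
      _ ≤ B * (3 / 4 : ℝ) ^ k + B * (3 / 4 : ℝ) ^ (k + 1) := add_le_add (hub k) (hub (k + 1))
      _ = (B + B * (3 / 4)) * (3 / 4 : ℝ) ^ k := by ring
  have hsumnorm : Summable (fun k : ℕ => ‖(1 / 2 : ℝ) • R *ᵥ ((1 - T) ^ k *ᵥ (R *ᵥ x))‖) := by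
    apply Summable.of_nonneg_of_le (fun k => norm_nonneg _) hFnorm
    exact ((summable_geometric_of_lt_one (by norm_num) (by norm_num)).mul_left _)
  have hsum : Summable (fun k : ℕ => (1 / 2 : ℝ) • R *ᵥ ((1 - T) ^ k *ᵥ (R *ᵥ x))) :=
    Summable.of_norm hsumnorm
  refine ⟨hsum, ?_⟩
  have hHas : HasSum (fun k : ℕ => (1 / 2 : ℝ) • R *ᵥ ((1 - T) ^ k *ᵥ (R *ᵥ x))) (Lp *ᵥ x) := by
    rw [hasSum_iff_tendsto_nat_of_summable_norm hsumnorm]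
    have hps : ∀ m, (∑ k ∈ Finset.range m,
        (1 / 2 : ℝ) • R *ᵥ ((1 - T) ^ k *ᵥ (R *ᵥ x))) = u 0 - u m := by
      intro m
      calc (∑ k ∈ Finset.range m, (1 / 2 : ℝ) • R *ᵥ ((1 - T) ^ k *ᵥ (R *ᵥ x)))
          = ∑ k ∈ Finset.range m, (u k - u (k + 1)) :=
            Finset.sum_congr rfl fun k _ => hfk k
        _ = u 0 - u m := Finset.sum_range_sub' u m
    simp only [hps]
    have hu_lim : Filter.Tendsto u Filter.atTop (nhds 0) := by
      apply squeeze_zero_norm hub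
      have := (tendsto_pow_atTop_nhds_zero_of_lt_one
        (by norm_num : (0 : ℝ) ≤ 3 / 4) (by norm_num : (3 / 4 : ℝ) < 1)).const_mul B
      simpa using this
    have hlim := (tendsto_const_nhds (x := u 0)
      (f := Filter.atTop (α := ℕ))).sub hu_lim
    rw [sub_zero] at hlim
    rw [← hu0]
    exact hlim
  exact hHas.tsum_eq
end

section
/- Let L' be a symmetric PSD matrix with (1 + √ε/4)^{-1} L ⪯ L' ⪯ (1 + √ε/4) L for a symmetric PSD matrix L with the same range, let ε ∈ (0,1), and let S be a symmetric matrix with (1 - √ε/4) L'⁺ ⪯ S ⪯ L'⁺. Then (1+√ε)^{-1} L⁺ ⪯ S ⪯ (1+√ε) L⁺. -/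
open Matrix

namespace Stmt19Aux

variable {n : ℕ}

lemma mp_unique {A X Y : Matrix (Fin n) (Fin n) ℝ}
    (hX : IsMoorePenroseInv A X) (hY : IsMoorePenroseInv A Y) : X = Y := by
  obtain ⟨hX1, hX2, hX3, hX4⟩ := hX
  obtain ⟨hY1, hY2, hY3, hY4⟩ := hY
  have hAX : A * X = A * Y := by
    calc A * X = (A * X)ᵀ := hX3.symm
    _ = (A * Y * A * X)ᵀ := by rw [show A * Y * A = A from hY1]
    _ = ((A * Y) * (A * X))ᵀ := by rw [Matrix.mul_assoc (A * Y) A X]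
    _ = (A * X)ᵀ * (A * Y)ᵀ := by rw [Matrix.transpose_mul]
    _ = (A * X) * (A * Y) := by rw [hX3, hY3]
    _ = A * X * A * Y := by rw [Matrix.mul_assoc (A * X) A Y]
    _ = A * Y := by rw [hX1]
  have hXA : X * A = Y * A := by
    calc X * A = (X * A)ᵀ := hX4.symm
    _ = (X * (A * Y * A))ᵀ := by rw [hY1]
    _ = ((X * A) * (Y * A))ᵀ := by
        rw [← Matrix.mul_assoc X (A * Y) A, ← Matrix.mul_assoc X A Y,
          Matrix.mul_assoc (X * A) Y A]
    _ = (Y * A)ᵀ * (X * A)ᵀ := by rw [Matrix.transpose_mul]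
    _ = (Y * A) * (X * A) := by rw [hX4, hY4]
    _ = Y * (A * X * A) := by rw [Matrix.mul_assoc Y A (X * A), Matrix.mul_assoc A X A]
    _ = Y * A := by rw [hX1]
  calc X = X * A * X := hX2.symm
  _ = X * (A * Y) := by rw [Matrix.mul_assoc, hAX]
  _ = (X * A) * Y := by rw [Matrix.mul_assoc]
  _ = Y * A * Y := by rw [hXA]
  _ = Y := hY2

lemma mp_transpose {A Ap : Matrix (Fin n) (Fin n) ℝ} (h : IsMoorePenroseInv A Ap) :
    IsMoorePenroseInv Aᵀ Apᵀ := by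
  obtain ⟨h1, h2, h3, h4⟩ := h
  refine ⟨?_, ?_, ?_, ?_⟩
  · rw [← Matrix.transpose_mul, ← Matrix.transpose_mul, ← Matrix.mul_assoc, h1]
  · rw [← Matrix.transpose_mul, ← Matrix.transpose_mul, ← Matrix.mul_assoc, h2]
  · rw [← Matrix.transpose_mul, Matrix.transpose_transpose, h4, ← h4]
  · rw [← Matrix.transpose_mul, Matrix.transpose_transpose, h3, ← h3]

lemma mp_symm {A Ap : Matrix (Fin n) (Fin n) ℝ} (hA : Aᵀ = A)
    (h : IsMoorePenroseInv A Ap) : Apᵀ = Ap := by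
  have := mp_transpose h
  rw [hA] at this
  exact mp_unique this h

lemma mp_smul {A Ap : Matrix (Fin n) (Fin n) ℝ} (h : IsMoorePenroseInv A Ap)
    {c : ℝ} (hc : c ≠ 0) : IsMoorePenroseInv (c • A) (c⁻¹ • Ap) := by
  obtain ⟨h1, h2, h3, h4⟩ := h
  refine ⟨?_, ?_, ?_, ?_⟩
  · have : (c • A) * (c⁻¹ • Ap) * (c • A) = (c * c⁻¹ * c) • (A * Ap * A) := by
      simp only [Matrix.smul_mul, Matrix.mul_smul, smul_smul]
      ring_nf
    rw [this, h1, mul_inv_cancel₀ hc, one_mul]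
  · have : (c⁻¹ • Ap) * (c • A) * (c⁻¹ • Ap) = (c⁻¹ * c * c⁻¹) • (Ap * A * Ap) := by
      simp only [Matrix.smul_mul, Matrix.mul_smul, smul_smul]
      ring_nf
    rw [this, h2, inv_mul_cancel₀ hc, one_mul]
  · have : (c • A) * (c⁻¹ • Ap) = (c⁻¹ * c) • (A * Ap) := by
      simp only [Matrix.smul_mul, Matrix.mul_smul, smul_smul]
    rw [this, inv_mul_cancel₀ hc, one_smul, h3]
  · have : (c⁻¹ • Ap) * (c • A) = (c * c⁻¹) • (Ap * A) := by
      simp only [Matrix.smul_mul, Matrix.mul_smul, smul_smul]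
    rw [this, mul_inv_cancel₀ hc, one_smul, h4]

lemma range_smul {A : Matrix (Fin n) (Fin n) ℝ} {c : ℝ} (hc : c ≠ 0) :
    Set.range (c • A).mulVec = Set.range A.mulVec := by
  ext x
  constructor
  · rintro ⟨v, rfl⟩
    exact ⟨c • v, by rw [Matrix.mulVec_smul, Matrix.smul_mulVec]⟩
  · rintro ⟨v, rfl⟩
    exact ⟨c⁻¹ • v, by
      rw [Matrix.mulVec_smul, Matrix.smul_mulVec, smul_smul,
        inv_mul_cancel₀ hc, one_smul]⟩

lemma dot_mulVec' (M : Matrix (Fin n) (Fin n) ℝ) (v w : Fin n → ℝ) :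
    v ⬝ᵥ M.mulVec w = (Mᵀ.mulVec v) ⬝ᵥ w := by
  rw [Matrix.dotProduct_mulVec, Matrix.mulVec_transpose]

lemma mulVec_dot (P : Matrix (Fin n) (Fin n) ℝ) (v w : Fin n → ℝ) :
    (P.mulVec v) ⬝ᵥ w = v ⬝ᵥ Pᵀ.mulVec w := by
  rw [dot_mulVec', Matrix.transpose_transpose]

lemma dot_symm_mulVec {M : Matrix (Fin n) (Fin n) ℝ} (hM : Mᵀ = M) (v w : Fin n → ℝ) :
    v ⬝ᵥ M.mulVec w = M.mulVec v ⬝ᵥ w := by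
  rw [dot_mulVec', hM]

lemma quad_conj (M P : Matrix (Fin n) (Fin n) ℝ) (z : Fin n → ℝ) :
    (P.mulVec z) ⬝ᵥ M.mulVec (P.mulVec z) = z ⬝ᵥ (Pᵀ * M * P).mulVec z := by
  rw [Matrix.mulVec_mulVec, mulVec_dot, Matrix.mulVec_mulVec, ← Matrix.mul_assoc]

lemma ext_mulVec {M N : Matrix (Fin n) (Fin n) ℝ}
    (h : ∀ z, M.mulVec z = N.mulVec z) : M = N := by
  ext i j
  have := congrFun (h (Pi.single j 1)) i
  simpa using this

/-- The two orthogonal projections onto a common range agree. -/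
lemma proj_eq {A B Ap Bp : Matrix (Fin n) (Fin n) ℝ}
    (hAp : IsMoorePenroseInv A Ap) (hBp : IsMoorePenroseInv B Bp)
    (hr : Set.range A.mulVec = Set.range B.mulVec) :
    A * Ap = B * Bp := by
  have hQP : (A * Ap) * (B * Bp) = B * Bp := by
    apply ext_mulVec
    intro z
    have hmem : (B * Bp).mulVec z ∈ Set.range A.mulVec := by
      rw [hr]
      exact ⟨Bp.mulVec z, by rw [Matrix.mulVec_mulVec]⟩
    obtain ⟨v, hv⟩ := hmem
    rw [← Matrix.mulVec_mulVec, ← hv, Matrix.mulVec_mulVec, hAp.1]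
  have hPQ : (B * Bp) * (A * Ap) = A * Ap := by
    apply ext_mulVec
    intro z
    have hmem : (A * Ap).mulVec z ∈ Set.range B.mulVec := by
      rw [← hr]
      exact ⟨Ap.mulVec z, by rw [Matrix.mulVec_mulVec]⟩
    obtain ⟨v, hv⟩ := hmem
    rw [← Matrix.mulVec_mulVec, ← hv, Matrix.mulVec_mulVec, hBp.1]
  calc A * Ap = (B * Bp) * (A * Ap) := hPQ.symm
  _ = ((A * Ap)ᵀ * (B * Bp)ᵀ)ᵀ := by
      rw [← Matrix.transpose_mul, Matrix.transpose_transpose]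
  _ = ((A * Ap) * (B * Bp))ᵀ := by rw [hAp.2.2.1, hBp.2.2.1]
  _ = (B * Bp)ᵀ := by rw [hQP]
  _ = B * Bp := hBp.2.2.1

lemma proj_quad {A Ap : Matrix (Fin n) (Fin n) ℝ} (hAsymm : Aᵀ = A)
    (hApsymm : Apᵀ = Ap) (hAp : IsMoorePenroseInv A Ap) :
    (A * Ap)ᵀ * Ap * (A * Ap) = Ap := by
  have hcomm : A * Ap = Ap * A := by
    rw [← hAp.2.2.1, Matrix.transpose_mul, hAsymm, hApsymm]
  rw [hAp.2.2.1, hcomm, hAp.2.1, ← hcomm, ← Matrix.mul_assoc, hAp.2.1]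

/-- Pseudoinversion reverses the Loewner order for PSD matrices of equal range. -/
lemma reversal {A B Ap Bp : Matrix (Fin n) (Fin n) ℝ}
    (hA : A.PosSemidef) (hB : B.PosSemidef)
    (hAp : IsMoorePenroseInv A Ap) (hBp : IsMoorePenroseInv B Bp)
    (hr : Set.range A.mulVec = Set.range B.mulVec)
    (hAB : LoewnerLE A B) : LoewnerLE Bp Ap := by
  have hAsymm : Aᵀ = A := by
    have := hA.1
    simpa [Matrix.IsHermitian, Matrix.conjTranspose_eq_transpose_of_trivial] using this
  have hBsymm : Bᵀ = B := by
    have := hB.1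
    simpa [Matrix.IsHermitian, Matrix.conjTranspose_eq_transpose_of_trivial] using this
  have hApsymm : Apᵀ = Ap := mp_symm hAsymm hAp
  have hBpsymm : Bpᵀ = Bp := mp_symm hBsymm hBp
  have hproj : A * Ap = B * Bp := proj_eq hAp hBp hr
  intro z
  set x : Fin n → ℝ := (B * Bp).mulVec z with hx
  set y : Fin n → ℝ := Bp.mulVec x with hy
  -- A * Ap fixes x
  have hAx : A.mulVec (Ap.mulVec x) = x := by
    have hmem : x ∈ Set.range A.mulVec := by
      rw [hr]; exact ⟨Bp.mulVec z, by rw [hx, Matrix.mulVec_mulVec]⟩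
    obtain ⟨v, hv⟩ := hmem
    rw [Matrix.mulVec_mulVec, ← hv, Matrix.mulVec_mulVec, hAp.1]
  -- B maps y back to x
  have hBx : B.mulVec y = x := by
    rw [hy, hx, Matrix.mulVec_mulVec, Matrix.mulVec_mulVec,
      ← Matrix.mul_assoc (B * Bp) B Bp, hBp.1]
  -- z ⬝ Bp z = x ⬝ y
  have step1 : z ⬝ᵥ Bp.mulVec z = x ⬝ᵥ y := by
    rw [hy, hx, quad_conj, proj_quad hBsymm hBpsymm hBp]
  -- y ⬝ B y = x ⬝ y
  have step2 : y ⬝ᵥ B.mulVec y = x ⬝ᵥ y := by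
    rw [hBx, dotProduct_comm]
  have hw : 0 ≤ (y - Ap.mulVec x) ⬝ᵥ A.mulVec (y - Ap.mulVec x) := by
    have := (posSemidef_iff_dotProduct_mulVec.mp hA).2 (y - Ap.mulVec x)
    simpa using this
  have expand : (y - Ap.mulVec x) ⬝ᵥ A.mulVec (y - Ap.mulVec x)
      = y ⬝ᵥ A.mulVec y - 2 * (x ⬝ᵥ y) + x ⬝ᵥ Ap.mulVec x := by
    have e1 : y ⬝ᵥ A.mulVec (Ap.mulVec x) = y ⬝ᵥ x := by rw [hAx]
    have e2 : Ap.mulVec x ⬝ᵥ A.mulVec y = x ⬝ᵥ y := by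
      rw [dot_symm_mulVec hAsymm, hAx]
    have e3 : Ap.mulVec x ⬝ᵥ A.mulVec (Ap.mulVec x) = x ⬝ᵥ Ap.mulVec x := by
      rw [hAx, dotProduct_comm, dot_symm_mulVec hApsymm]
    rw [Matrix.mulVec_sub, sub_dotProduct, dotProduct_sub,
      dotProduct_sub, e1, e2, e3]
    have e4 : y ⬝ᵥ x = x ⬝ᵥ y := dotProduct_comm _ _
    rw [e4]; ring
  -- x ⬝ Ap x = z ⬝ Ap z
  have step3 : x ⬝ᵥ Ap.mulVec x = z ⬝ᵥ Ap.mulVec z := by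
    rw [hx, ← hproj, quad_conj, proj_quad hAsymm hApsymm hAp]
  have hle : y ⬝ᵥ A.mulVec y ≤ y ⬝ᵥ B.mulVec y := hAB y
  calc z ⬝ᵥ Bp.mulVec z = x ⬝ᵥ y := step1
  _ = 2 * (x ⬝ᵥ y) - y ⬝ᵥ B.mulVec y := by rw [step2]; ring
  _ ≤ 2 * (x ⬝ᵥ y) - y ⬝ᵥ A.mulVec y := by linarith
  _ ≤ x ⬝ᵥ Ap.mulVec x := by nlinarith [hw, expand]
  _ = z ⬝ᵥ Ap.mulVec z := step3

lemma mp_psd {A Ap : Matrix (Fin n) (Fin n) ℝ} (hA : A.PosSemidef)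
    (hAp : IsMoorePenroseInv A Ap) (z : Fin n → ℝ) : 0 ≤ z ⬝ᵥ Ap.mulVec z := by
  have hAsymm : Aᵀ = A := by
    have := hA.1
    simpa [Matrix.IsHermitian, Matrix.conjTranspose_eq_transpose_of_trivial] using this
  have hApsymm : Apᵀ = Ap := mp_symm hAsymm hAp
  have h0 : (Ap.mulVec z) ⬝ᵥ A.mulVec (Ap.mulVec z) = z ⬝ᵥ Ap.mulVec z := by
    rw [Matrix.mulVec_mulVec, mulVec_dot, Matrix.mulVec_mulVec, hApsymm,
      ← Matrix.mul_assoc, hAp.2.1]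
  rw [← h0]
  have := (posSemidef_iff_dotProduct_mulVec.mp hA).2 (Ap.mulVec z)
  simpa using this

lemma psd_smul {A : Matrix (Fin n) (Fin n) ℝ} (hA : A.PosSemidef) {c : ℝ}
    (hc : 0 ≤ c) : (c • A).PosSemidef := by
  rw [posSemidef_iff_dotProduct_mulVec]
  constructor
  · have h := hA.1.eq
    simp only [Matrix.IsHermitian, Matrix.conjTranspose_smul]
    rw [h]
    congr 1
  · intro x
    have := (posSemidef_iff_dotProduct_mulVec.mp hA).2 x
    rw [Matrix.smul_mulVec, dotProduct_smul, smul_eq_mul]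
    exact mul_nonneg hc this

end Stmt19Aux

open Stmt19Aux in
theorem stmt_19 {n : ℕ} (L L' Lp L'p S : Matrix (Fin n) (Fin n) ℝ)
    (hL : L.PosSemidef) (hL' : L'.PosSemidef)
    (hLp : IsMoorePenroseInv L Lp) (hL'p : IsMoorePenroseInv L' L'p)
    (hrange : Set.range L.mulVec = Set.range L'.mulVec)
    (ε : ℝ) (hε0 : 0 < ε) (hε1 : ε < 1)
    (hlow : LoewnerLE ((1 + Real.sqrt ε / 4)⁻¹ • L) L')
    (hhigh : LoewnerLE L' ((1 + Real.sqrt ε / 4) • L))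
    (hS : Sᵀ = S)
    (hSlow : LoewnerLE ((1 - Real.sqrt ε / 4) • L'p) S)
    (hShigh : LoewnerLE S L'p) :
    LoewnerLE ((1 + Real.sqrt ε)⁻¹ • Lp) S ∧ LoewnerLE S ((1 + Real.sqrt ε) • Lp) := by
  set s := Real.sqrt ε with hs
  have hs0 : 0 < s := Real.sqrt_pos.mpr hε0
  have hs1 : s < 1 := by
    rw [hs, show (1:ℝ) = Real.sqrt 1 from (Real.sqrt_one).symm]
    exact Real.sqrt_lt_sqrt hε0.le hε1
  set δ : ℝ := s / 4 with hδ
  have hδ0 : 0 < δ := by positivity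
  have hδ1 : δ < 1 := by rw [hδ]; linarith
  have hc0 : (0:ℝ) < 1 + δ := by linarith
  have hc0' : (1 + δ : ℝ) ≠ 0 := ne_of_gt hc0
  have hPSD1 : ((1 + δ)⁻¹ • L).PosSemidef := psd_smul hL (by positivity)
  have hPSD2 : ((1 + δ) • L).PosSemidef := psd_smul hL (by positivity)
  have hMP1 : IsMoorePenroseInv ((1 + δ)⁻¹ • L) ((1 + δ) • Lp) := by
    have := mp_smul hLp (c := (1 + δ)⁻¹) (by positivity)
    rwa [inv_inv] at this
  have hMP2 : IsMoorePenroseInv ((1 + δ) • L) ((1 + δ)⁻¹ • Lp) := mp_smul hLp hc0'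
  have hr1 : Set.range ((1 + δ)⁻¹ • L).mulVec = Set.range L'.mulVec := by
    rw [range_smul (by positivity : ((1 + δ):ℝ)⁻¹ ≠ 0), hrange]
  have hr2 : Set.range L'.mulVec = Set.range ((1 + δ) • L).mulVec := by
    rw [range_smul hc0', hrange]
  have hrev1 : LoewnerLE L'p ((1 + δ) • Lp) :=
    reversal hPSD1 hL' hMP1 hL'p hr1 hlow
  have hrev2 : LoewnerLE ((1 + δ)⁻¹ • Lp) L'p :=
    reversal hL' hPSD2 hL'p hMP2 hr2 hhigh
  have hLpnn : ∀ z, 0 ≤ z ⬝ᵥ Lp.mulVec z := mp_psd hL hLp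
  have hL'pnn : ∀ z, 0 ≤ z ⬝ᵥ L'p.mulVec z := mp_psd hL' hL'p
  constructor
  · intro z
    have h1 := hSlow z
    have h2 := hrev2 z
    have ha := hLpnn z
    have hb := hL'pnn z
    rw [Matrix.smul_mulVec, dotProduct_smul, smul_eq_mul] at h1 h2 ⊢
    set a := z ⬝ᵥ Lp.mulVec z with hadef
    set b := z ⬝ᵥ L'p.mulVec z with hbdef
    have hco : (1 + s)⁻¹ ≤ (1 - δ) * (1 + δ)⁻¹ := by
      rw [show (1 - δ) * (1 + δ)⁻¹ = (1 - δ) / (1 + δ) from (div_eq_mul_inv _ _).symm,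
        show ((1 + s):ℝ)⁻¹ = 1 / (1 + s) from (one_div _).symm,
        div_le_div_iff₀ (by linarith) hc0]
      rw [hδ]
      nlinarith [hs0.le, hs1]
    have key : (1 + s)⁻¹ * a ≤ (1 - δ) * ((1 + δ)⁻¹ * a) := by
      calc (1 + s)⁻¹ * a ≤ ((1 - δ) * (1 + δ)⁻¹) * a :=
        mul_le_mul_of_nonneg_right hco ha
      _ = (1 - δ) * ((1 + δ)⁻¹ * a) := by ring
    calc (1 + s)⁻¹ * a ≤ (1 - δ) * ((1 + δ)⁻¹ * a) := key
    _ ≤ (1 - δ) * b := mul_le_mul_of_nonneg_left h2 (by linarith)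
    _ ≤ z ⬝ᵥ S.mulVec z := h1
  · intro z
    have h1 := hShigh z
    have h2 := hrev1 z
    have ha := hLpnn z
    rw [Matrix.smul_mulVec, dotProduct_smul, smul_eq_mul] at h2 ⊢
    have hδs : δ ≤ s := by rw [hδ]; linarith
    calc z ⬝ᵥ S.mulVec z ≤ z ⬝ᵥ L'p.mulVec z := h1
    _ ≤ (1 + δ) * (z ⬝ᵥ Lp.mulVec z) := h2
    _ ≤ (1 + s) * (z ⬝ᵥ Lp.mulVec z) := by nlinarith [ha]
end
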